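/- arXiv:2603.15201 — 6 statements merged into one kernel-verified Lean document; each statement's English description precedes it below -/
import Mathlib

section
/- Let λ > -μ_0 be a real number. Given κ ∈ ℝ, φ1, φ2, φ3 ∈ L^1(0,∞) and y1, y2 ∈ ℝ, define ψ1(a) = κ·exp(-∫_0^a (μ_h(s)+λ)ds) + ∫_0^a φ1(s)·exp(-∫_s^a (μ_h(τ)+λ)dτ)ds, ψ2(a) = ∫_0^a φ2(s)·exp(-∫_s^a (μ_h(τ)+δ(τ)+r_1(τ)+λ)dτ)ds, ψ3(a) = ∫_0^a φ3(s)·exp(-∫_s^a (μ_h(τ)+r_2(τ)+λ)dτ)ds, x1 = y1/(λ+μ_v) and x2 = y2/(λ+μ_v). Then ψ1, ψ2, ψ3 ∈ L^1(0,∞) and ‖ψ1‖_{L^1} + ‖ψ2‖_{L^1} + ‖ψ3‖_{L^1} + |x1| + |x2| ≤ (|κ| + ‖φ1‖_{L^1} + ‖φ2‖_{L^1} + ‖φ3‖_{L^1} + |y1| + |y2|)/(λ+μ_0). Moreover, if κ ≥ 0, φ1, φ2, φ3 ≥ 0 a.e. and y1, y2 ≥ 0, then ψ1, ψ2, ψ3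 ≥ 0 a.e. and x1, x2 ≥ 0. -/
open MeasureTheory Real Set

lemma expInt_eq (c : ℝ) (hc : 0 < c) (s : ℝ) :
    (∫ a in Ioi s, exp (-(c * (a - s)))) = 1 / c := by
  have h : (fun a : ℝ => exp (-(c * (a - s)))) = fun a => exp (c * s) * exp (-(c * a)) := by
    funext a
    rw [show -(c * (a - s)) = c * s + -(c * a) by ring, exp_add]
  rw [h, integral_const_mul]
  rw [integral_comp_mul_left_Ioi (fun x => exp (-x)) s hc, integral_exp_neg_Ioi]
  rw [smul_eq_mul, ← mul_assoc, mul_comm (exp (c*s)), mul_assoc, ← exp_add]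
  rw [add_neg_cancel, exp_zero, mul_one, one_div]

lemma expInt_integrable (c : ℝ) (hc : 0 < c) (s : ℝ) :
    IntegrableOn (fun a => exp (-(c * (a - s)))) (Ioi s) := by
  have h : (fun a : ℝ => exp (-(c * (a - s)))) = fun a => exp (c * s) * exp (-c * a) := by
    funext a
    rw [show -(c * (a - s)) = c * s + -c * a by ring, exp_add]
  rw [h]
  exact (exp_neg_integrableOn_Ioi s hc).const_mul _

lemma tonelli_conv (c : ℝ) (hc : 0 < c) (φ : ℝ → ℝ) (hφm : Measurable φ) :
    (∫⁻ a in Ioi (0:ℝ), ∫⁻ s in Ioc (0:ℝ) a, ENNReal.ofReal (|φ s| * exp (-(c * (a - s)))))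
      = ENNReal.ofReal (1/c) * ∫⁻ s in Ioi (0:ℝ), ENNReal.ofReal |φ s| := by
  set F : ℝ → ℝ → ENNReal := fun a s =>
    (Ioc (0:ℝ) a).indicator (fun s => ENNReal.ofReal (|φ s| * exp (-(c * (a - s))))) s with hF
  have hFmeas : AEMeasurable (Function.uncurry F) ((volume.restrict (Ioi (0:ℝ))).prod volume) := by
    have hset : MeasurableSet {p : ℝ × ℝ | 0 < p.2 ∧ p.2 ≤ p.1} :=
      (measurableSet_lt measurable_const measurable_snd).inter
        (measurableSet_le measurable_snd measurable_fst)
    have hfun : Measurable fun p : ℝ × ℝ => ENNReal.ofReal (|φ p.2| * exp (-(c * (p.1 - p.2)))) := by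
      apply Measurable.ennreal_ofReal
      exact ((hφm.comp measurable_snd).abs.mul
        ((((measurable_fst.sub measurable_snd).const_mul c).neg).exp))
    have : Function.uncurry F = Set.indicator {p : ℝ × ℝ | 0 < p.2 ∧ p.2 ≤ p.1}
        (fun p => ENNReal.ofReal (|φ p.2| * exp (-(c * (p.1 - p.2))))) := by
      funext p
      simp [Function.uncurry, hF, Set.indicator_apply, mem_Ioc, mem_setOf_eq]
    rw [this]
    exact (hfun.indicator hset).aemeasurable
  calc (∫⁻ a in Ioi (0:ℝ), ∫⁻ s in Ioc (0:ℝ) a, ENNReal.ofReal (|φ s| * exp (-(c * (a - s)))))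
      = ∫⁻ a in Ioi (0:ℝ), ∫⁻ s, F a s := by
        refine lintegral_congr fun a => ?_
        rw [hF, lintegral_indicator measurableSet_Ioc]
    _ = ∫⁻ s, ∫⁻ a in Ioi (0:ℝ), F a s := lintegral_lintegral_swap hFmeas
    _ = ∫⁻ s, (Ioi (0:ℝ)).indicator
          (fun s => ENNReal.ofReal |φ s| * ENNReal.ofReal (1/c)) s := by
        refine lintegral_congr fun s => ?_
        by_cases hs : (0:ℝ) < s
        · have hFs : ∀ a, F a s = (Ici s).indicator
              (fun a => ENNReal.ofReal (|φ s| * exp (-(c * (a - s))))) a := by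
            intro a
            simp [hF, Set.indicator_apply, mem_Ioc, mem_Ici, hs]
          simp_rw [hFs]
          rw [lintegral_indicator measurableSet_Ici, Measure.restrict_restrict measurableSet_Ici,
            show Ici s ∩ Ioi 0 = Ici s from inter_eq_left.mpr (fun x hx => lt_of_lt_of_le hs hx),
            Measure.restrict_congr_set Ioi_ae_eq_Ici.symm]
          have hmono : (∫⁻ a in Ioi s, ENNReal.ofReal (|φ s| * exp (-(c * (a - s)))))
              = ENNReal.ofReal |φ s| * ENNReal.ofReal (1/c) := by
            simp_rw [ENNReal.ofReal_mul (abs_nonneg (φ s))]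
            rw [lintegral_const_mul _ (by
              exact ((((measurable_id.sub measurable_const).const_mul c).neg).exp).ennreal_ofReal)]
            rw [← ofReal_integral_eq_lintegral_ofReal (expInt_integrable c hc s)
              (Filter.Eventually.of_forall fun x => (exp_pos _).le), expInt_eq c hc s]
          rw [hmono]
          simp [Set.indicator_apply, hs]
        · have hFs : ∀ a, F a s = 0 := by
            intro a
            simp [hF, Set.indicator_apply, mem_Ioc, hs]
          simp_rw [hFs]
          rw [lintegral_zero]
          simp [Set.indicator_apply, hs]
    _ = ∫⁻ s in Ioi (0:ℝ), ENNReal.ofReal |φ s| * ENNReal.ofReal (1/c) := by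
        rw [← lintegral_indicator measurableSet_Ioi]
    _ = ENNReal.ofReal (1/c) * ∫⁻ s in Ioi (0:ℝ), ENNReal.ofReal |φ s| := by
        rw [lintegral_mul_const' _ _ ENNReal.ofReal_ne_top, mul_comm]

lemma resolvent_aux (c B : ℝ) (hc : 0 < c) (g : ℝ → ℝ) (hgm : Measurable g)
    (hg_lb : ∀ a, c ≤ g a) (hgB : ∀ a, g a ≤ B)
    (κ : ℝ) (φ : ℝ → ℝ) (hφm : Measurable φ) (hφ : IntegrableOn φ (Ioi 0))
    (ψ : ℝ → ℝ)
    (hψ : ∀ a, ψ a = κ * exp (-(∫ s in (0:ℝ)..a, g s)) +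
      ∫ s in (0:ℝ)..a, φ s * exp (-(∫ τ in s..a, g τ))) :
    IntegrableOn ψ (Ioi 0) ∧
    (∫ a in Ioi (0:ℝ), |ψ a|) ≤ (|κ| + ∫ a in Ioi (0:ℝ), |φ a|) / c ∧
    (0 ≤ κ → (∀ᵐ a ∂(volume.restrict (Ioi (0:ℝ))), 0 ≤ φ a) →
      ∀ᵐ a ∂(volume.restrict (Ioi (0:ℝ))), 0 ≤ ψ a) := by
  have hInt : ∀ u v : ℝ, IntervalIntegrable g volume u v := by
    intro u v
    rw [intervalIntegrable_iff]
    apply Measure.integrableOn_of_bounded (M := B)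
    · exact (measure_Ioc_lt_top).ne
    · exact hgm.aestronglyMeasurable
    · refine Filter.Eventually.of_forall fun x => ?_
      rw [Real.norm_eq_abs, abs_of_pos (lt_of_lt_of_le hc (hg_lb x))]
      exact hgB x
  set G : ℝ → ℝ := fun a => ∫ s in (0:ℝ)..a, g s with hGdef
  have hGcont : Continuous G := intervalIntegral.continuous_primitive hInt 0
  have hGsub : ∀ s a : ℝ, (∫ τ in s..a, g τ) = G a - G s := fun s a =>
    (intervalIntegral.integral_interval_sub_left (hInt 0 a) (hInt 0 s)).symm
  have hGlow : ∀ {s a : ℝ}, s ≤ a → c * (a - s) ≤ ∫ τ in s..a, g τ := by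
    intro s a hsa
    have h1 : (∫ τ in s..a, (fun _ => c) τ) ≤ ∫ τ in s..a, g τ :=
      intervalIntegral.integral_mono_on hsa intervalIntegrable_const (hInt s a)
        (fun x _ => hg_lb x)
    simpa [intervalIntegral.integral_const, smul_eq_mul, mul_comm] using h1
  have hexp : ∀ {s a : ℝ}, s ≤ a →
      exp (-(∫ τ in s..a, g τ)) ≤ exp (-(c * (a - s))) :=
    fun h => exp_le_exp.mpr (neg_le_neg (hGlow h))
  set φ' : ℝ → ℝ := (Ioi (0:ℝ)).indicator φ with hφ'def
  have hφ'int : Integrable φ' := (integrable_indicator_iff measurableSet_Ioi).mpr hφ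
  set h : ℝ → ℝ := fun s => exp (G s) * φ' s with hhdef
  have hh_int : ∀ u v : ℝ, IntervalIntegrable h volume u v := by
    intro u v
    rw [intervalIntegrable_iff]
    exact IntegrableOn.continuousOn_mul_of_subset
      ((continuous_exp.comp hGcont).continuousOn) hφ'int.integrableOn
      isCompact_uIcc measurableSet_uIoc Ioc_subset_Icc_self
  set H : ℝ → ℝ := fun a => ∫ s in (0:ℝ)..a, h s with hHdef
  have hHcont : Continuous H := intervalIntegral.continuous_primitive hh_int 0
  have hψeq : ∀ a ∈ Ioi (0:ℝ), ψ a = κ * exp (-(G a)) + H a * exp (-(G a)) := by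
    intro a ha
    rw [hψ a]
    congr 1
    have h1 : (∫ s in (0:ℝ)..a, φ s * exp (-(∫ τ in s..a, g τ)))
        = ∫ s in (0:ℝ)..a, h s * exp (-(G a)) := by
      apply intervalIntegral.integral_congr_ae
      refine Filter.Eventually.of_forall fun s hs => ?_
      rw [uIoc_of_le (le_of_lt ha)] at hs
      rw [hGsub s a, show -(G a - G s) = G s + -(G a) by ring, exp_add, hhdef]
      simp only [hφ'def, indicator_of_mem (mem_Ioi.mpr hs.1) φ]
      ring
    rw [h1, intervalIntegral.integral_mul_const]
  have hmeas : AEStronglyMeasurable ψ (volume.restrict (Ioi (0:ℝ))) := by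
    have hcont : Continuous fun a => κ * exp (-(G a)) + H a * exp (-(G a)) :=
      (continuous_const.mul (continuous_exp.comp hGcont.neg)).add
        (hHcont.mul (continuous_exp.comp hGcont.neg))
    refine hcont.aestronglyMeasurable.congr ?_
    exact ae_restrict_of_forall_mem measurableSet_Ioi fun a ha => (hψeq a ha).symm
  have hbound : ∀ a ∈ Ioi (0:ℝ), (‖ψ a‖₊ : ENNReal) ≤
      ENNReal.ofReal (|κ| * exp (-(c * a))) +
      ∫⁻ s in Ioc (0:ℝ) a, ENNReal.ofReal (|φ s| * exp (-(c * (a - s)))) := by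
    intro a ha
    have ha' : (0:ℝ) ≤ a := le_of_lt ha
    rw [hψ a]
    refine le_trans (le_trans (ENNReal.coe_le_coe.mpr (nnnorm_add_le _ _))
      (le_of_eq (ENNReal.coe_add _ _))) (add_le_add ?_ ?_)
    · rw [← enorm_eq_nnnorm, ← ofReal_norm, Real.norm_eq_abs, abs_mul, abs_of_pos (exp_pos _)]
      apply ENNReal.ofReal_le_ofReal
      refine mul_le_mul_of_nonneg_left ?_ (abs_nonneg κ)
      have := hexp (s := 0) (a := a) ha'
      simpa using this
    · rw [intervalIntegral.integral_of_le ha']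
      refine le_trans (enorm_integral_le_lintegral_enorm _) ?_
      refine lintegral_mono_ae ?_
      refine ae_restrict_of_forall_mem measurableSet_Ioc fun s hs => ?_
      rw [← ofReal_norm, Real.norm_eq_abs, abs_mul, abs_of_pos (exp_pos _)]
      exact ENNReal.ofReal_le_ofReal
        (mul_le_mul_of_nonneg_left (hexp hs.2) (abs_nonneg _))
  have hκexp_meas : Measurable fun a : ℝ => ENNReal.ofReal (|κ| * exp (-(c * a))) := by
    apply Measurable.ennreal_ofReal
    exact (measurable_const.mul (((measurable_id.const_mul c).neg).exp))
  have hIoi0 : (∫⁻ a in Ioi (0:ℝ), ENNReal.ofReal (exp (-(c * a)))) = ENNReal.ofReal (1/c) := by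
    have heq : (∫⁻ a in Ioi (0:ℝ), ENNReal.ofReal (exp (-(c * a))))
        = ∫⁻ a in Ioi (0:ℝ), ENNReal.ofReal (exp (-(c * (a - 0)))) :=
      lintegral_congr fun a => by norm_num
    rw [heq, ← ofReal_integral_eq_lintegral_ofReal (expInt_integrable c hc 0)
      (Filter.Eventually.of_forall fun x => (exp_pos _).le), expInt_eq c hc 0]
  have hφabs_nonneg : (0:ℝ) ≤ ∫ a in Ioi (0:ℝ), |φ a| :=
    integral_nonneg fun a => abs_nonneg _
  have hlint : (∫⁻ a in Ioi (0:ℝ), (‖ψ a‖₊ : ENNReal)) ≤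
      ENNReal.ofReal ((|κ| + ∫ a in Ioi (0:ℝ), |φ a|) * (1/c)) := by
    calc (∫⁻ a in Ioi (0:ℝ), (‖ψ a‖₊ : ENNReal))
        ≤ ∫⁻ a in Ioi (0:ℝ), (ENNReal.ofReal (|κ| * exp (-(c * a))) +
            ∫⁻ s in Ioc (0:ℝ) a, ENNReal.ofReal (|φ s| * exp (-(c * (a - s))))) :=
          lintegral_mono_ae (ae_restrict_of_forall_mem measurableSet_Ioi hbound)
      _ = (∫⁻ a in Ioi (0:ℝ), ENNReal.ofReal (|κ| * exp (-(c * a)))) +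
            ∫⁻ a in Ioi (0:ℝ), ∫⁻ s in Ioc (0:ℝ) a,
              ENNReal.ofReal (|φ s| * exp (-(c * (a - s)))) :=
          lintegral_add_left hκexp_meas _
      _ = ENNReal.ofReal |κ| * ENNReal.ofReal (1/c) +
            ENNReal.ofReal (1/c) * ∫⁻ s in Ioi (0:ℝ), ENNReal.ofReal |φ s| := by
          rw [tonelli_conv c hc φ hφm]
          congr 1
          simp_rw [ENNReal.ofReal_mul (abs_nonneg κ)]
          rw [lintegral_const_mul _ (by
            exact (((measurable_id.const_mul c).neg).exp).ennreal_ofReal), hIoi0]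
      _ = ENNReal.ofReal ((|κ| + ∫ a in Ioi (0:ℝ), |φ a|) * (1/c)) := by
          rw [← ofReal_integral_eq_lintegral_ofReal hφ.abs
            (Filter.Eventually.of_forall fun x => abs_nonneg _)]
          rw [← ENNReal.ofReal_mul (abs_nonneg κ),
            ← ENNReal.ofReal_mul (by positivity : (0:ℝ) ≤ 1/c),
            ← ENNReal.ofReal_add (by positivity) (by positivity)]
          congr 1
          ring
  have hint : IntegrableOn ψ (Ioi 0) :=
    ⟨hmeas, lt_of_le_of_lt hlint ENNReal.ofReal_lt_top⟩
  refine ⟨hint, ?_, ?_⟩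
  · have habs : (∫ a in Ioi (0:ℝ), |ψ a|) = (∫⁻ a in Ioi (0:ℝ), (‖ψ a‖₊ : ENNReal)).toReal := by
      simp_rw [← Real.norm_eq_abs]
      rw [integral_eq_lintegral_of_nonneg_ae
        (Filter.Eventually.of_forall fun a => norm_nonneg _) hmeas.norm]
      congr 1
      refine lintegral_congr fun a => ?_
      rw [ofReal_norm, enorm_eq_nnnorm]
    rw [habs, div_eq_mul_one_div]
    refine le_trans (ENNReal.toReal_mono ENNReal.ofReal_ne_top hlint) ?_
    rw [ENNReal.toReal_ofReal (by positivity)]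
  · intro hκ hφ0
    refine ae_restrict_of_forall_mem measurableSet_Ioi fun a ha => ?_
    rw [hψ a]
    have h1 : 0 ≤ κ * exp (-(∫ s in (0:ℝ)..a, g s)) := mul_nonneg hκ (exp_pos _).le
    have h2 : 0 ≤ ∫ s in (0:ℝ)..a, φ s * exp (-(∫ τ in s..a, g τ)) := by
      rw [intervalIntegral.integral_of_le (le_of_lt ha)]
      apply integral_nonneg_of_ae
      have : ∀ᵐ s ∂volume.restrict (Ioc (0:ℝ) a), 0 ≤ φ s :=
        ae_restrict_of_ae_restrict_of_subset Ioc_subset_Ioi_self hφ0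
      filter_upwards [this] with s hs
      exact mul_nonneg hs (exp_pos _).le
    linarith


/-- Resolvent estimate and positivity for the linear operator `A` of the
age-structured SIRS/SI malaria model (Hille–Yosida property). -/
theorem resolvent_estimate_and_positivity
    (Λh Λv μv μ0 : ℝ)
    (μh δ r1 r2 : ℝ → ℝ)
    (hΛh : 0 < Λh) (hΛv : 0 < Λv) (hμv : 0 < μv) (hμ0 : 0 < μ0)
    (hμhm : Measurable μh) (hδm : Measurable δ) (hr1m : Measurable r1) (hr2m : Measurable r2)
    (hμh_lb : ∀ a, μ0 ≤ μh a) (hμv_lb : μ0 ≤ μv)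
    (hδ0 : ∀ a, 0 ≤ δ a) (hr10 : ∀ a, 0 ≤ r1 a) (hr20 : ∀ a, 0 ≤ r2 a)
    (Bμh Bδ Br1 Br2 : ℝ)
    (hμhB : ∀ a, μh a ≤ Bμh) (hδB : ∀ a, δ a ≤ Bδ)
    (hr1B : ∀ a, r1 a ≤ Br1) (hr2B : ∀ a, r2 a ≤ Br2)
    (lam : ℝ) (hlam : -μ0 < lam)
    (κ y1 y2 : ℝ) (φ1 φ2 φ3 : ℝ → ℝ)
    (hφ1m : Measurable φ1) (hφ2m : Measurable φ2) (hφ3m : Measurable φ3)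
    (hφ1 : IntegrableOn φ1 (Ioi 0)) (hφ2 : IntegrableOn φ2 (Ioi 0))
    (hφ3 : IntegrableOn φ3 (Ioi 0))
    (ψ1 ψ2 ψ3 : ℝ → ℝ) (x1 x2 : ℝ)
    (hψ1 : ∀ a, ψ1 a = κ * exp (-(∫ s in (0:ℝ)..a, (μh s + lam))) +
      ∫ s in (0:ℝ)..a, φ1 s * exp (-(∫ τ in s..a, (μh τ + lam))))
    (hψ2 : ∀ a, ψ2 a =
      ∫ s in (0:ℝ)..a, φ2 s * exp (-(∫ τ in s..a, (μh τ + δ τ + r1 τ + lam))))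
    (hψ3 : ∀ a, ψ3 a =
      ∫ s in (0:ℝ)..a, φ3 s * exp (-(∫ τ in s..a, (μh τ + r2 τ + lam))))
    (hx1 : x1 = y1 / (lam + μv)) (hx2 : x2 = y2 / (lam + μv)) :
    (IntegrableOn ψ1 (Ioi 0) ∧ IntegrableOn ψ2 (Ioi 0) ∧ IntegrableOn ψ3 (Ioi 0)) ∧
    ((∫ a in Ioi (0:ℝ), |ψ1 a|) + (∫ a in Ioi (0:ℝ), |ψ2 a|) + (∫ a in Ioi (0:ℝ), |ψ3 a|)
        + |x1| + |x2|
      ≤ (|κ| + (∫ a in Ioi (0:ℝ), |φ1 a|) + (∫ a in Ioi (0:ℝ), |φ2 a|)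
          + (∫ a in Ioi (0:ℝ), |φ3 a|) + |y1| + |y2|) / (lam + μ0)) ∧
    (0 ≤ κ →
      (∀ᵐ a ∂(volume.restrict (Ioi (0:ℝ))), 0 ≤ φ1 a) →
      (∀ᵐ a ∂(volume.restrict (Ioi (0:ℝ))), 0 ≤ φ2 a) →
      (∀ᵐ a ∂(volume.restrict (Ioi (0:ℝ))), 0 ≤ φ3 a) →
      0 ≤ y1 → 0 ≤ y2 →
      ((∀ᵐ a ∂(volume.restrict (Ioi (0:ℝ))), 0 ≤ ψ1 a) ∧
       (∀ᵐ a ∂(volume.restrict (Ioi (0:ℝ))), 0 ≤ ψ2 a) ∧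
       (∀ᵐ a ∂(volume.restrict (Ioi (0:ℝ))), 0 ≤ ψ3 a) ∧
       0 ≤ x1 ∧ 0 ≤ x2)) := by
  have hc : 0 < lam + μ0 := by linarith
  have hμv' : 0 < lam + μv := by linarith
  obtain ⟨hi1, he1, hp1⟩ := resolvent_aux (lam + μ0) (Bμh + lam) hc
    (fun s => μh s + lam) (hμhm.add_const lam)
    (fun a => by show lam + μ0 ≤ μh a + lam; linarith [hμh_lb a])
    (fun a => by show μh a + lam ≤ Bμh + lam; linarith [hμhB a])
    κ φ1 hφ1m hφ1 ψ1 hψ1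
  obtain ⟨hi2, he2, hp2⟩ := resolvent_aux (lam + μ0) (Bμh + Bδ + Br1 + lam) hc
    (fun τ => μh τ + δ τ + r1 τ + lam) (((hμhm.add hδm).add hr1m).add_const lam)
    (fun a => by show lam + μ0 ≤ μh a + δ a + r1 a + lam; linarith [hμh_lb a, hδ0 a, hr10 a])
    (fun a => by show μh a + δ a + r1 a + lam ≤ Bμh + Bδ + Br1 + lam
                 linarith [hμhB a, hδB a, hr1B a])
    0 φ2 hφ2m hφ2 ψ2 (fun a => by rw [hψ2 a, zero_mul, zero_add])
  obtain ⟨hi3, he3, hp3⟩ := resolvent_aux (lam + μ0) (Bμh + Br2 + lam) hc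
    (fun τ => μh τ + r2 τ + lam) ((hμhm.add hr2m).add_const lam)
    (fun a => by show lam + μ0 ≤ μh a + r2 a + lam; linarith [hμh_lb a, hr20 a])
    (fun a => by show μh a + r2 a + lam ≤ Bμh + Br2 + lam; linarith [hμhB a, hr2B a])
    0 φ3 hφ3m hφ3 ψ3 (fun a => by rw [hψ3 a, zero_mul, zero_add])
  rw [abs_zero, zero_add] at he2 he3
  refine ⟨⟨hi1, hi2, hi3⟩, ?_, ?_⟩
  · have hx1abs : |x1| = |y1| / (lam + μv) := by rw [hx1, abs_div, abs_of_pos hμv']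
    have hx2abs : |x2| = |y2| / (lam + μv) := by rw [hx2, abs_div, abs_of_pos hμv']
    have hx1le : |x1| ≤ |y1| / (lam + μ0) := by
      rw [hx1abs]; gcongr <;> linarith
    have hx2le : |x2| ≤ |y2| / (lam + μ0) := by
      rw [hx2abs]; gcongr <;> linarith
    have key : (|κ| + ∫ a in Ioi (0:ℝ), |φ1 a|) / (lam + μ0)
        + (∫ a in Ioi (0:ℝ), |φ2 a|) / (lam + μ0)
        + (∫ a in Ioi (0:ℝ), |φ3 a|) / (lam + μ0)
        + |y1| / (lam + μ0) + |y2| / (lam + μ0)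
        = (|κ| + (∫ a in Ioi (0:ℝ), |φ1 a|) + (∫ a in Ioi (0:ℝ), |φ2 a|)
          + (∫ a in Ioi (0:ℝ), |φ3 a|) + |y1| + |y2|) / (lam + μ0) := by ring
    linarith
  · intro hκ h1 h2 h3 hy1 hy2
    refine ⟨hp1 hκ h1, hp2 le_rfl h2, hp3 le_rfl h3, ?_, ?_⟩
    · rw [hx1]; exact div_nonneg hy1 hμv'.le
    · rw [hx2]; exact div_nonneg hy2 hμv'.le
end

section
/- Let m > 0 and set c_m = 2m(‖β_h‖_{L^∞} + ‖β_v‖_{L^∞}) + ‖r_1‖_{L^∞} + ‖r_2‖_{L^∞}. For w = (s_h, i_h, r_h, S_v, I_v) with s_h, i_h, r_h ∈ L^1(0,∞) and S_v, I_v ∈ ℝ, define ‖w‖ = ‖s_h‖_{L^1} + ‖i_h‖_{L^1} + ‖r_h‖_{L^1} + |S_v| + |I_v| and let F(w) = (Λ_h, -β_v·s_h·I_v + r_2·r_h, β_v·s_h·I_v, r_1·i_h, Λ_v - S_v·∫_0^∞ β_h(a)i_h(a)da, S_v·∫_0^∞ β_h(a)i_h(a)da), where the second, third and fourth components are functions of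 a ∈ (0,∞). Then for all w, w' with ‖w‖ ≤ m and ‖w'‖ ≤ m one has ‖F(w) - F(w')‖ ≤ c_m·‖w - w'‖ (with ‖F(w)-F(w')‖ measured as the sum of the absolute value of the real components and the L^1 norms of the function components). -/
open MeasureTheory Real Set ENNReal NNReal

lemma aux_ae_abs_le {μ : Measure ℝ} (f : ℝ → ℝ) (hf : MemLp f ⊤ μ) :
    ∀ᵐ a ∂μ, |f a| ≤ (eLpNorm f ⊤ μ).toReal := by
  filter_upwards [ae_le_eLpNormEssSup (f := f) (μ := μ)] with a ha
  have hfin : eLpNormEssSup f μ ≠ ⊤ := by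
    rw [← eLpNorm_exponent_top]; exact hf.2.ne
  have h1 : (‖f a‖₊ : ℝ≥0∞) ≤ eLpNormEssSup f μ := by exact_mod_cast ha
  have h2 := ENNReal.toReal_mono hfin h1
  rw [eLpNorm_exponent_top]
  simpa [Real.norm_eq_abs] using h2
set_option maxHeartbeats 1000000 in
/-- The nonlinear part `F` of the abstract Cauchy problem of the age-structured
SIRS/SI malaria model is Lipschitz continuous on bounded sets, with Lipschitz
constant `c_m = 2m(‖β_h‖_∞ + ‖β_v‖_∞) + ‖r_1‖_∞ + ‖r_2‖_∞` on the ball of radius `m`. -/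
theorem F_lipschitz_on_bounded_sets
    (Λh Λv : ℝ) (r1 r2 βh βv : ℝ → ℝ)
    (hΛh : 0 < Λh) (hΛv : 0 < Λv)
    (hr1m : Measurable r1) (hr2m : Measurable r2)
    (hβhm : Measurable βh) (hβvm : Measurable βv)
    (hr10 : ∀ a, 0 ≤ r1 a) (hr20 : ∀ a, 0 ≤ r2 a)
    (hβh0 : ∀ a, 0 ≤ βh a) (hβv0 : ∀ a, 0 ≤ βv a)
    (hr1B : MemLp r1 ⊤ (volume.restrict (Ioi (0:ℝ))))
    (hr2B : MemLp r2 ⊤ (volume.restrict (Ioi (0:ℝ))))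
    (hβhB : MemLp βh ⊤ (volume.restrict (Ioi (0:ℝ))))
    (hβvB : MemLp βv ⊤ (volume.restrict (Ioi (0:ℝ))))
    (m cm : ℝ) (hm : 0 < m)
    (hcm : cm = 2 * m * ((eLpNorm βh ⊤ (volume.restrict (Ioi (0:ℝ)))).toReal
          + (eLpNorm βv ⊤ (volume.restrict (Ioi (0:ℝ)))).toReal)
        + (eLpNorm r1 ⊤ (volume.restrict (Ioi (0:ℝ)))).toReal
        + (eLpNorm r2 ⊤ (volume.restrict (Ioi (0:ℝ)))).toReal)
    (sh ih rh sh' ih' rh' : ℝ → ℝ) (Sv Iv Sv' Iv' : ℝ)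
    (hsh : IntegrableOn sh (Ioi 0)) (hih : IntegrableOn ih (Ioi 0))
    (hrh : IntegrableOn rh (Ioi 0))
    (hsh' : IntegrableOn sh' (Ioi 0)) (hih' : IntegrableOn ih' (Ioi 0))
    (hrh' : IntegrableOn rh' (Ioi 0))
    (hwm : (∫ a in Ioi (0:ℝ), |sh a|) + (∫ a in Ioi (0:ℝ), |ih a|)
        + (∫ a in Ioi (0:ℝ), |rh a|) + |Sv| + |Iv| ≤ m)
    (hwm' : (∫ a in Ioi (0:ℝ), |sh' a|) + (∫ a in Ioi (0:ℝ), |ih' a|)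
        + (∫ a in Ioi (0:ℝ), |rh' a|) + |Sv'| + |Iv'| ≤ m) :
    |Λh - Λh|
      + (∫ a in Ioi (0:ℝ), |(-(βv a) * sh a * Iv + r2 a * rh a)
            - (-(βv a) * sh' a * Iv' + r2 a * rh' a)|)
      + (∫ a in Ioi (0:ℝ), |βv a * sh a * Iv - βv a * sh' a * Iv'|)
      + (∫ a in Ioi (0:ℝ), |r1 a * ih a - r1 a * ih' a|)
      + |(Λv - Sv * ∫ a in Ioi (0:ℝ), βh a * ih a)
            - (Λv - Sv' * ∫ a in Ioi (0:ℝ), βh a * ih' a)|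
      + |Sv * (∫ a in Ioi (0:ℝ), βh a * ih a) - Sv' * (∫ a in Ioi (0:ℝ), βh a * ih' a)|
    ≤ cm * ((∫ a in Ioi (0:ℝ), |sh a - sh' a|) + (∫ a in Ioi (0:ℝ), |ih a - ih' a|)
        + (∫ a in Ioi (0:ℝ), |rh a - rh' a|) + |Sv - Sv'| + |Iv - Iv'|) := by
  set Bh := (eLpNorm βh ⊤ (volume.restrict (Ioi (0:ℝ)))).toReal with hBh
  set Bv := (eLpNorm βv ⊤ (volume.restrict (Ioi (0:ℝ)))).toReal with hBv
  set R1 := (eLpNorm r1 ⊤ (volume.restrict (Ioi (0:ℝ)))).toReal with hR1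
  set R2 := (eLpNorm r2 ⊤ (volume.restrict (Ioi (0:ℝ)))).toReal with hR2
  have hBh0 : 0 ≤ Bh := ENNReal.toReal_nonneg
  have hBv0 : 0 ≤ Bv := ENNReal.toReal_nonneg
  have hR10 : 0 ≤ R1 := ENNReal.toReal_nonneg
  have hR20 : 0 ≤ R2 := ENNReal.toReal_nonneg
  have hβv' := aux_ae_abs_le βv hβvB
  have hβh' := aux_ae_abs_le βh hβhB
  have hr1' := aux_ae_abs_le r1 hr1B
  have hr2' := aux_ae_abs_le r2 hr2B
  set Ds := ∫ a in Ioi (0:ℝ), |sh a - sh' a| with hDs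
  set Di := ∫ a in Ioi (0:ℝ), |ih a - ih' a| with hDi
  set Dr := ∫ a in Ioi (0:ℝ), |rh a - rh' a| with hDr
  have hDs0 : 0 ≤ Ds := integral_nonneg fun a => abs_nonneg _
  have hDi0 : 0 ≤ Di := integral_nonneg fun a => abs_nonneg _
  have hDr0 : 0 ≤ Dr := integral_nonneg fun a => abs_nonneg _
  have hsh0 : 0 ≤ ∫ a in Ioi (0:ℝ), |sh a| := integral_nonneg fun a => abs_nonneg _
  have hih0 : 0 ≤ ∫ a in Ioi (0:ℝ), |ih a| := integral_nonneg fun a => abs_nonneg _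
  have hrh0 : 0 ≤ ∫ a in Ioi (0:ℝ), |rh a| := integral_nonneg fun a => abs_nonneg _
  have hsh0' : 0 ≤ ∫ a in Ioi (0:ℝ), |sh' a| := integral_nonneg fun a => abs_nonneg _
  have hih0' : 0 ≤ ∫ a in Ioi (0:ℝ), |ih' a| := integral_nonneg fun a => abs_nonneg _
  have hrh0' : 0 ≤ ∫ a in Ioi (0:ℝ), |rh' a| := integral_nonneg fun a => abs_nonneg _
  have hshm : ∫ a in Ioi (0:ℝ), |sh a| ≤ m := by
    have := abs_nonneg Sv; have := abs_nonneg Iv; linarith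
  have hihm' : ∫ a in Ioi (0:ℝ), |ih' a| ≤ m := by
    have := abs_nonneg Sv'; have := abs_nonneg Iv'; linarith
  have hIv'm : |Iv'| ≤ m := by linarith [abs_nonneg Sv']
  have hSvm : |Sv| ≤ m := by linarith [abs_nonneg Iv]
  have hshs_int : Integrable (fun a => |sh a - sh' a| * m) (volume.restrict (Ioi (0:ℝ))) :=
    (hsh.sub hsh').abs.mul_const _
  have hrhr_int : Integrable (fun a => R2 * |rh a - rh' a|) (volume.restrict (Ioi (0:ℝ))) :=
    ((hrh.sub hrh').abs).const_mul _
  have hihi_int : Integrable (fun a => R1 * |ih a - ih' a|) (volume.restrict (Ioi (0:ℝ))) :=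
    ((hih.sub hih').abs).const_mul _
  have hg2int : Integrable (fun a => Bv * (|sh a| * |Iv - Iv'| + |sh a - sh' a| * m))
      (volume.restrict (Ioi (0:ℝ))) :=
    (((hsh.abs.mul_const _).add hshs_int).const_mul _)
  have hg2val : (∫ a in Ioi (0:ℝ), Bv * (|sh a| * |Iv - Iv'| + |sh a - sh' a| * m))
      = Bv * ((∫ a in Ioi (0:ℝ), |sh a|) * |Iv - Iv'| + Ds * m) := by
    rw [integral_const_mul, integral_add (hsh.abs.mul_const _) hshs_int,
      integral_mul_const, integral_mul_const]
  have hptw : ∀ a, |βv a| ≤ Bv →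
      |βv a * sh a * Iv - βv a * sh' a * Iv'| ≤ Bv * (|sh a| * |Iv - Iv'| + |sh a - sh' a| * m) := by
    intro a ha
    have h1 : βv a * sh a * Iv - βv a * sh' a * Iv'
        = βv a * (sh a * (Iv - Iv') + (sh a - sh' a) * Iv') := by ring
    rw [h1, abs_mul]
    have h2 : |sh a * (Iv - Iv') + (sh a - sh' a) * Iv'|
        ≤ |sh a| * |Iv - Iv'| + |sh a - sh' a| * m := by
      calc |sh a * (Iv - Iv') + (sh a - sh' a) * Iv'|
          ≤ |sh a * (Iv - Iv')| + |(sh a - sh' a) * Iv'| := abs_add_le _ _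
        _ ≤ |sh a| * |Iv - Iv'| + |sh a - sh' a| * m := by
            rw [abs_mul, abs_mul]
            exact add_le_add le_rfl (mul_le_mul_of_nonneg_left hIv'm (abs_nonneg _))
    exact mul_le_mul ha h2 (abs_nonneg _) hBv0
  have key3 : (∫ a in Ioi (0:ℝ), |βv a * sh a * Iv - βv a * sh' a * Iv'|)
      ≤ Bv * (m * |Iv - Iv'| + Ds * m) := by
    calc (∫ a in Ioi (0:ℝ), |βv a * sh a * Iv - βv a * sh' a * Iv'|)
        ≤ ∫ a in Ioi (0:ℝ), Bv * (|sh a| * |Iv - Iv'| + |sh a - sh' a| * m) := by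
          refine integral_mono_of_nonneg (ae_of_all _ fun a => abs_nonneg _) hg2int ?_
          filter_upwards [hβv'] with a ha using hptw a ha
      _ = Bv * ((∫ a in Ioi (0:ℝ), |sh a|) * |Iv - Iv'| + Ds * m) := hg2val
      _ ≤ Bv * (m * |Iv - Iv'| + Ds * m) := by
          apply mul_le_mul_of_nonneg_left _ hBv0
          exact add_le_add (mul_le_mul_of_nonneg_right hshm (abs_nonneg _)) le_rfl
  have key2 : (∫ a in Ioi (0:ℝ), |(-(βv a) * sh a * Iv + r2 a * rh a)
            - (-(βv a) * sh' a * Iv' + r2 a * rh' a)|)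
      ≤ Bv * (m * |Iv - Iv'| + Ds * m) + R2 * Dr := by
    have hint : Integrable (fun a => Bv * (|sh a| * |Iv - Iv'| + |sh a - sh' a| * m)
        + R2 * |rh a - rh' a|) (volume.restrict (Ioi (0:ℝ))) := hg2int.add hrhr_int
    calc (∫ a in Ioi (0:ℝ), |(-(βv a) * sh a * Iv + r2 a * rh a)
            - (-(βv a) * sh' a * Iv' + r2 a * rh' a)|)
        ≤ ∫ a in Ioi (0:ℝ), (Bv * (|sh a| * |Iv - Iv'| + |sh a - sh' a| * m)
            + R2 * |rh a - rh' a|) := by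
          refine integral_mono_of_nonneg (ae_of_all _ fun a => abs_nonneg _) hint ?_
          filter_upwards [hβv', hr2'] with a ha hb
          have h1 : (-(βv a) * sh a * Iv + r2 a * rh a) - (-(βv a) * sh' a * Iv' + r2 a * rh' a)
              = -(βv a * sh a * Iv - βv a * sh' a * Iv') + r2 a * (rh a - rh' a) := by ring
          calc |(-(βv a) * sh a * Iv + r2 a * rh a) - (-(βv a) * sh' a * Iv' + r2 a * rh' a)|
              ≤ |βv a * sh a * Iv - βv a * sh' a * Iv'| + |r2 a| * |rh a - rh' a| := by
                rw [h1]; refine (abs_add_le _ _).trans ?_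
                rw [abs_neg, abs_mul]
            _ ≤ Bv * (|sh a| * |Iv - Iv'| + |sh a - sh' a| * m) + R2 * |rh a - rh' a| :=
                add_le_add (hptw a ha) (mul_le_mul_of_nonneg_right hb (abs_nonneg _))
      _ = Bv * ((∫ a in Ioi (0:ℝ), |sh a|) * |Iv - Iv'| + Ds * m) + R2 * Dr := by
          rw [integral_add hg2int hrhr_int, hg2val, integral_const_mul]
      _ ≤ Bv * (m * |Iv - Iv'| + Ds * m) + R2 * Dr := by
          refine add_le_add ?_ le_rfl
          apply mul_le_mul_of_nonneg_left _ hBv0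
          exact add_le_add (mul_le_mul_of_nonneg_right hshm (abs_nonneg _)) le_rfl
  have key4 : (∫ a in Ioi (0:ℝ), |r1 a * ih a - r1 a * ih' a|) ≤ R1 * Di := by
    calc (∫ a in Ioi (0:ℝ), |r1 a * ih a - r1 a * ih' a|)
        ≤ ∫ a in Ioi (0:ℝ), R1 * |ih a - ih' a| := by
          refine integral_mono_of_nonneg (ae_of_all _ fun a => abs_nonneg _) hihi_int ?_
          filter_upwards [hr1'] with a ha
          have h1 : r1 a * ih a - r1 a * ih' a = r1 a * (ih a - ih' a) := by ring
          rw [h1, abs_mul]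
          exact mul_le_mul_of_nonneg_right ha (abs_nonneg _)
      _ = R1 * Di := integral_const_mul _ _
  have hβhih : Integrable (fun a => βh a * ih a) (volume.restrict (Ioi (0:ℝ))) :=
    Integrable.bdd_mul hih hβhm.aestronglyMeasurable (by
      filter_upwards [hβh'] with a ha using by simpa [Real.norm_eq_abs] using ha)
  have hβhih' : Integrable (fun a => βh a * ih' a) (volume.restrict (Ioi (0:ℝ))) :=
    Integrable.bdd_mul hih' hβhm.aestronglyMeasurable (by
      filter_upwards [hβh'] with a ha using by simpa [Real.norm_eq_abs] using ha)
  have hbound : ∀ (g : ℝ → ℝ), IntegrableOn g (Ioi 0) →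
      |∫ a in Ioi (0:ℝ), βh a * g a| ≤ Bh * ∫ a in Ioi (0:ℝ), |g a| := by
    intro g hg
    calc |∫ a in Ioi (0:ℝ), βh a * g a| ≤ ∫ a in Ioi (0:ℝ), |βh a * g a| := by
          simpa only [Real.norm_eq_abs] using
            norm_integral_le_integral_norm (μ := volume.restrict (Ioi (0:ℝ)))
              (f := fun a => βh a * g a)
      _ ≤ ∫ a in Ioi (0:ℝ), Bh * |g a| := by
          refine integral_mono_of_nonneg (ae_of_all _ fun a => abs_nonneg _)
            (hg.abs.const_mul _) ?_
          filter_upwards [hβh'] with a ha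
          rw [abs_mul]
          exact mul_le_mul_of_nonneg_right ha (abs_nonneg _)
      _ = Bh * ∫ a in Ioi (0:ℝ), |g a| := integral_const_mul _ _
  have hIdiff : |(∫ a in Ioi (0:ℝ), βh a * ih a) - (∫ a in Ioi (0:ℝ), βh a * ih' a)|
      ≤ Bh * Di := by
    rw [← integral_sub hβhih hβhih']
    have h1 : ∀ a, βh a * ih a - βh a * ih' a = βh a * (ih a - ih' a) := fun a => by ring
    simp only [h1]
    exact hbound _ (hih.sub hih')
  have hI'le : |∫ a in Ioi (0:ℝ), βh a * ih' a| ≤ Bh * m :=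
    (hbound ih' hih').trans (mul_le_mul_of_nonneg_left hihm' hBh0)
  have key5 : |Sv * (∫ a in Ioi (0:ℝ), βh a * ih a) - Sv' * (∫ a in Ioi (0:ℝ), βh a * ih' a)|
      ≤ m * (Bh * Di) + |Sv - Sv'| * (Bh * m) := by
    set I := ∫ a in Ioi (0:ℝ), βh a * ih a
    set I' := ∫ a in Ioi (0:ℝ), βh a * ih' a
    have h1 : Sv * I - Sv' * I' = Sv * (I - I') + (Sv - Sv') * I' := by ring
    calc |Sv * I - Sv' * I'| ≤ |Sv| * |I - I'| + |Sv - Sv'| * |I'| := by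
          rw [h1]; refine (abs_add_le _ _).trans ?_; rw [abs_mul, abs_mul]
      _ ≤ m * (Bh * Di) + |Sv - Sv'| * (Bh * m) :=
          add_le_add (mul_le_mul hSvm hIdiff (abs_nonneg _) (le_trans (abs_nonneg _) hSvm))
            (mul_le_mul_of_nonneg_left hI'le (abs_nonneg _))
  have key5' : |(Λv - Sv * ∫ a in Ioi (0:ℝ), βh a * ih a)
      - (Λv - Sv' * ∫ a in Ioi (0:ℝ), βh a * ih' a)|
      = |Sv * (∫ a in Ioi (0:ℝ), βh a * ih a) - Sv' * (∫ a in Ioi (0:ℝ), βh a * ih' a)| := by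
    rw [show (Λv - Sv * ∫ a in Ioi (0:ℝ), βh a * ih a)
      - (Λv - Sv' * ∫ a in Ioi (0:ℝ), βh a * ih' a)
      = -(Sv * (∫ a in Ioi (0:ℝ), βh a * ih a) - Sv' * (∫ a in Ioi (0:ℝ), βh a * ih' a)) by ring,
      abs_neg]
  set dS := |Sv - Sv'| with hdS
  set dI := |Iv - Iv'| with hdI
  have hdS0 : (0:ℝ) ≤ dS := abs_nonneg _
  have hdI0 : (0:ℝ) ≤ dI := abs_nonneg _
  rw [key5', sub_self, abs_zero, hcm]
  have hRHS : (2 * m * (Bh + Bv) + R1 + R2) * (Ds + Di + Dr + dS + dI)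
      = (Bv * (m * dI + Ds * m) + R2 * Dr) + Bv * (m * dI + Ds * m) + R1 * Di
        + 2 * (m * (Bh * Di) + dS * (Bh * m))
        + (2 * m * Bv * (Di + Dr + dS) + 2 * m * Bh * (Ds + Dr + dI)
            + R1 * (Ds + Dr + dS + dI) + R2 * (Ds + Di + dS + dI)) := by ring
  have hslack : (0:ℝ) ≤ 2 * m * Bv * (Di + Dr + dS) + 2 * m * Bh * (Ds + Dr + dI)
      + R1 * (Ds + Dr + dS + dI) + R2 * (Ds + Di + dS + dI) := by
    have h1 : (0:ℝ) ≤ 2 * m * Bv * (Di + Dr + dS) :=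
      mul_nonneg (mul_nonneg (by linarith) hBv0) (by linarith)
    have h2 : (0:ℝ) ≤ 2 * m * Bh * (Ds + Dr + dI) :=
      mul_nonneg (mul_nonneg (by linarith) hBh0) (by linarith)
    have h3 : (0:ℝ) ≤ R1 * (Ds + Dr + dS + dI) := mul_nonneg hR10 (by linarith)
    have h4 : (0:ℝ) ≤ R2 * (Ds + Di + dS + dI) := mul_nonneg hR20 (by linarith)
    linarith
  linarith [key2, key3, key4, key5]
end

section
/- Let K : L^1(0,∞) × ℝ → L^1(0,∞) × ℝ be the continuous linear operator defined by K(B_1, B_2) = ( a ↦ β_v(a)·s_h^0(a)·B_2/μ_v , S_v^0·∫_0^∞ ∫_0^∞ β_h(ξ+s)·B_1(ξ)·exp(-∫_ξ^{ξ+s}(μ_h(u)+δ(u)+r_1(u))du) dξ ds ). Then K is well defined, bounded and compact, and its spectral radius equals R_0. -/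
open MeasureTheory Real Set

section Aux

lemma ngo_bddII {f : ℝ → ℝ} (hf : Measurable f) {C : ℝ} (hC : ∀ x, |f x| ≤ C) (a b : ℝ) :
    IntervalIntegrable f volume a b := by
  rw [intervalIntegrable_iff]
  exact Measure.integrableOn_of_bounded measure_Ioc_lt_top.ne hf.aestronglyMeasurable
    (ae_of_all _ hC)

end Aux

set_option maxHeartbeats 1000000

/-- The next generation operator `K` of the age-structured SIRS/SI malaria model is a
well-defined bounded compact operator on `L¹(0,∞) × ℝ`, whose spectral radius equals
the basic reproduction number `R₀`. -/
theorem next_generation_operator_spectral_radius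
    (Λh Λv μv μ0 : ℝ)
    (μh δ r1 r2 βh βv : ℝ → ℝ)
    (hΛh : 0 < Λh) (hΛv : 0 < Λv) (hμv : 0 < μv) (hμ0 : 0 < μ0)
    (hμhm : Measurable μh) (hδm : Measurable δ) (hr1m : Measurable r1)
    (hr2m : Measurable r2) (hβhm : Measurable βh) (hβvm : Measurable βv)
    (hμh_lb : ∀ a, μ0 ≤ μh a) (hμv_lb : μ0 ≤ μv)
    (hδ0 : ∀ a, 0 ≤ δ a) (hr10 : ∀ a, 0 ≤ r1 a) (hr20 : ∀ a, 0 ≤ r2 a)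
    (hβh0 : ∀ a, 0 ≤ βh a) (hβv0 : ∀ a, 0 ≤ βv a)
    (Bμh Bδ Br1 Br2 Bβh Bβv : ℝ)
    (hμhB : ∀ a, μh a ≤ Bμh) (hδB : ∀ a, δ a ≤ Bδ) (hr1B : ∀ a, r1 a ≤ Br1)
    (hr2B : ∀ a, r2 a ≤ Br2) (hβhB : ∀ a, βh a ≤ Bβh) (hβvB : ∀ a, βv a ≤ Bβv)
    (hirr : 0 < ∫ a in Ioi (0:ℝ), ∫ s in Ioi (0:ℝ), βh (a+s) * βv a * exp (-μ0 * (a+s)))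
    (sh0 : ℝ → ℝ) (hsh0 : ∀ a, sh0 a = Λh * exp (-(∫ u in (0:ℝ)..a, μh u)))
    (Sv0 : ℝ) (hSv0def : Sv0 = Λv / μv)
    (R0 : ℝ)
    (hR0 : R0 = Real.sqrt ((Sv0 / μv) * ∫ s in Ioi (0:ℝ), ∫ ξ in Ioi (0:ℝ),
      βh (ξ+s) * βv ξ * sh0 ξ * exp (-(∫ u in ξ..(ξ+s), (μh u + r1 u + δ u))))) :
    ∃ K : (Lp ℝ 1 (volume.restrict (Ioi (0:ℝ))) × ℝ) →L[ℝ]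
          (Lp ℝ 1 (volume.restrict (Ioi (0:ℝ))) × ℝ),
      (∀ B : Lp ℝ 1 (volume.restrict (Ioi (0:ℝ))) × ℝ,
        (⇑((K B).1) =ᵐ[volume.restrict (Ioi (0:ℝ))]
          fun a => βv a * sh0 a * B.2 / μv) ∧
        (K B).2 = Sv0 * ∫ s in Ioi (0:ℝ), ∫ ξ in Ioi (0:ℝ),
          βh (ξ+s) * (B.1 : ℝ → ℝ) ξ * exp (-(∫ u in ξ..(ξ+s), (μh u + δ u + r1 u)))) ∧
      IsCompactOperator K ∧
      spectralRadius ℝ K = ENNReal.ofReal R0 := by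
  classical
  set ν : Measure ℝ := volume.restrict (Ioi (0:ℝ)) with hν
  set E := Lp ℝ 1 ν with hE
  have hμv' : μv ≠ 0 := ne_of_gt hμv
  -- the kernel function
  set F : ℝ → ℝ := fun u => μh u + δ u + r1 u with hFdef
  have hFm : Measurable F := (hμhm.add hδm).add hr1m
  have hFnn : ∀ u, 0 ≤ F u := fun u => by
    have h1 := hμh_lb u; have h2 := hδ0 u; have h3 := hr10 u
    show 0 ≤ μh u + δ u + r1 u; linarith
  have hF_lb : ∀ u, μ0 ≤ F u := fun u => by
    have h1 := hμh_lb u; have h2 := hδ0 u; have h3 := hr10 u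
    show μ0 ≤ μh u + δ u + r1 u; linarith
  have hFB : ∀ u, |F u| ≤ Bμh + Bδ + Br1 := fun u => by
    rw [abs_of_nonneg (hFnn u)]
    have h1 := hμhB u; have h2 := hδB u; have h3 := hr1B u
    show μh u + δ u + r1 u ≤ _; linarith
  have hFii : ∀ a b : ℝ, IntervalIntegrable F volume a b := ngo_bddII hFm hFB
  have hμhii : ∀ a b : ℝ, IntervalIntegrable μh volume a b := by
    refine ngo_bddII hμhm (C := Bμh) (fun x => ?_)
    rw [abs_of_nonneg (le_trans hμ0.le (hμh_lb x))]; exact hμhB x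
  -- lower bound on kernel exponents
  have hFint_lb : ∀ ξ s : ℝ, 0 ≤ s → μ0 * s ≤ ∫ u in ξ..(ξ+s), F u := by
    intro ξ s hs
    have h1 : ∫ u in ξ..(ξ+s), (μ0 : ℝ) ≤ ∫ u in ξ..(ξ+s), F u := by
      refine intervalIntegral.integral_mono_on (by linarith) intervalIntegrable_const
        (hFii _ _) (fun x _ => hF_lb x)
    rwa [intervalIntegral.integral_const, smul_eq_mul, add_sub_cancel_left, mul_comm] at h1
  have hμh_int_lb : ∀ a : ℝ, 0 ≤ a → μ0 * a ≤ ∫ u in (0:ℝ)..a, μh u := by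
    intro a ha
    have h1 : ∫ u in (0:ℝ)..a, (μ0 : ℝ) ≤ ∫ u in (0:ℝ)..a, μh u := by
      refine intervalIntegral.integral_mono_on ha intervalIntegrable_const
        (hμhii _ _) (fun x _ => hμh_lb x)
    rwa [intervalIntegral.integral_const, smul_eq_mul, sub_zero, mul_comm] at h1
  -- kernel split and measurability
  set G : ℝ → ℝ := fun x => ∫ u in (0:ℝ)..x, F u with hGdef
  have hGc : Continuous G := intervalIntegral.continuous_primitive hFii 0
  have hsplit : ∀ ξ s : ℝ, (∫ u in ξ..(ξ+s), F u) = G (ξ+s) - G ξ := fun ξ s =>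
    (intervalIntegral.integral_interval_sub_left (hFii 0 (ξ+s)) (hFii 0 ξ)).symm
  set kk : ℝ × ℝ → ℝ := fun p => βh (p.2+p.1) * exp (-(∫ u in p.2..(p.2+p.1), F u)) with hkkdef
  have hkkm : Measurable kk := by
    have : kk = fun p : ℝ × ℝ => βh (p.2+p.1) * exp (-(G (p.2+p.1) - G p.2)) := by
      funext p; simp only [hkkdef, hsplit]
    rw [this]
    exact (hβhm.comp (measurable_snd.add measurable_fst)).mul
      ((Real.continuous_exp.comp (((hGc.comp (continuous_snd.add continuous_fst)).sub
        (hGc.comp continuous_snd)).neg)).measurable)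
  have hkknn : ∀ p : ℝ × ℝ, 0 ≤ kk p := fun p => mul_nonneg (hβh0 _) (exp_nonneg _)
  have hBβh0 : 0 ≤ Bβh := le_trans (hβh0 0) (hβhB 0)
  have hkkb : ∀ p : ℝ × ℝ, 0 ≤ p.1 → kk p ≤ Bβh * exp (-μ0 * p.1) := by
    intro p hp
    refine mul_le_mul (hβhB _) ?_ (exp_nonneg _) hBβh0
    rw [exp_le_exp]
    have := hFint_lb p.2 p.1 hp
    linarith
  -- the dominating function in the s-variable
  have hexp : Integrable (fun s : ℝ => Bβh * exp (-μ0 * s)) ν :=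
    (exp_neg_integrableOn_Ioi 0 hμ0).const_mul Bβh
  have hprodae : ∀ᵐ p ∂(ν.prod ν), p ∈ Ioi (0:ℝ) ×ˢ Ioi (0:ℝ) := by
    rw [hν, Measure.prod_restrict]
    exact ae_restrict_mem (measurableSet_Ioi.prod measurableSet_Ioi)
  -- key integrability lemma
  have key : ∀ g : ℝ → ℝ, AEStronglyMeasurable g ν → Integrable g ν →
      Integrable (fun p : ℝ × ℝ => kk p * g p.2) (ν.prod ν) := by
    intro g hgm hg
    have hdom : Integrable (fun p : ℝ × ℝ => (Bβh * exp (-μ0 * p.1)) * |g p.2|) (ν.prod ν) :=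
      hexp.mul_prod hg.abs
    refine Integrable.mono' hdom
      (hkkm.aestronglyMeasurable.mul
        (hgm.comp_quasiMeasurePreserving Measure.quasiMeasurePreserving_snd)) ?_
    filter_upwards [hprodae] with p hp
    rcases hp with ⟨hp1, _⟩
    rw [Real.norm_eq_abs, abs_mul, abs_of_nonneg (hkknn p)]
    exact mul_le_mul_of_nonneg_right (hkkb p (le_of_lt hp1)) (abs_nonneg _)
  -- iterated = product integral
  have hiter : ∀ g : ℝ → ℝ, AEStronglyMeasurable g ν → Integrable g ν →
      (∫ s in Ioi (0:ℝ), ∫ ξ in Ioi (0:ℝ),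
        βh (ξ+s) * exp (-(∫ u in ξ..(ξ+s), F u)) * g ξ)
      = ∫ p, kk p * g p.2 ∂(ν.prod ν) := by
    intro g hgm hg
    have h := MeasureTheory.integral_integral (μ := ν) (ν := ν)
      (f := fun s ξ => βh (ξ+s) * exp (-(∫ u in ξ..(ξ+s), F u)) * g ξ) ?_
    · exact h
    · exact key g hgm hg
  -- norm bound
  set I0 : ℝ := ∫ s, Bβh * exp (-μ0 * s) ∂ν with hI0def
  have hbound : ∀ g : ℝ → ℝ, AEStronglyMeasurable g ν → Integrable g ν →
      ‖∫ p, kk p * g p.2 ∂(ν.prod ν)‖ ≤ I0 * ∫ ξ, |g ξ| ∂ν := by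
    intro g hgm hg
    have h1 : ‖∫ p, kk p * g p.2 ∂(ν.prod ν)‖
        ≤ ∫ p, (Bβh * exp (-μ0 * p.1)) * |g p.2| ∂(ν.prod ν) := by
      refine norm_integral_le_of_norm_le (hexp.mul_prod hg.abs) ?_
      filter_upwards [hprodae] with p hp
      rcases hp with ⟨hp1, _⟩
      rw [Real.norm_eq_abs, abs_mul, abs_of_nonneg (hkknn p)]
      exact mul_le_mul_of_nonneg_right (hkkb p (le_of_lt hp1)) (abs_nonneg _)
    rw [MeasureTheory.integral_prod_mul (f := fun s => Bβh * exp (-μ0 * s))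
      (g := fun ξ => |g ξ|)] at h1
    exact h1
  -- the linear functional L₀ and its continuous version L
  set L₀ : E →ₗ[ℝ] ℝ :=
    { toFun := fun B => Sv0 * ∫ p, kk p * (B : ℝ → ℝ) p.2 ∂(ν.prod ν)
      map_add' := by
        intro B B'
        have hcoe : ⇑(B + B') =ᵐ[ν] ⇑B + ⇑B' := Lp.coeFn_add B B'
        have hcoe2 : (fun p : ℝ × ℝ => kk p * (⇑(B + B')) p.2)
            =ᵐ[ν.prod ν] fun p => kk p * (⇑B p.2 + ⇑B' p.2) := by
          filter_upwards [Measure.QuasiMeasurePreserving.ae_eq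
            Measure.quasiMeasurePreserving_snd hcoe] with p hp
          simp only [Function.comp] at hp ⊢
          rw [hp]; rfl
        rw [integral_congr_ae hcoe2]
        have h1 := key (⇑B) (Lp.aestronglyMeasurable B) (L1.integrable_coeFn B)
        have h2 := key (⇑B') (Lp.aestronglyMeasurable B') (L1.integrable_coeFn B')
        have : (fun p : ℝ × ℝ => kk p * (⇑B p.2 + ⇑B' p.2))
            = fun p => kk p * ⇑B p.2 + kk p * ⇑B' p.2 := by funext p; ring
        rw [this, integral_add h1 h2]; ring
      map_smul' := by
        intro t B
        have hcoe : ⇑(t • B) =ᵐ[ν] t • ⇑B := Lp.coeFn_smul t B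
        have hcoe2 : (fun p : ℝ × ℝ => kk p * (⇑(t • B)) p.2)
            =ᵐ[ν.prod ν] fun p => t * (kk p * ⇑B p.2) := by
          filter_upwards [Measure.QuasiMeasurePreserving.ae_eq
            Measure.quasiMeasurePreserving_snd hcoe] with p hp
          simp only [Function.comp] at hp ⊢
          rw [hp]; simp [smul_eq_mul]; ring
        rw [integral_congr_ae hcoe2, integral_const_mul]
        simp only [RingHom.id_apply, smul_eq_mul]; ring } with hL₀def
  have hL₀bound : ∀ B : E, ‖L₀ B‖ ≤ (|Sv0| * I0) * ‖B‖ := by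
    intro B
    have h1 := hbound (⇑B) (Lp.aestronglyMeasurable B) (L1.integrable_coeFn B)
    have hnorm : ‖B‖ = ∫ ξ, |(B : ℝ → ℝ) ξ| ∂ν := by
      rw [L1.norm_eq_integral_norm]; simp [Real.norm_eq_abs]
    have : ‖L₀ B‖ = |Sv0| * ‖∫ p, kk p * (B : ℝ → ℝ) p.2 ∂(ν.prod ν)‖ := by
      simp only [hL₀def, LinearMap.coe_mk, AddHom.coe_mk, Real.norm_eq_abs, abs_mul]
    rw [this, hnorm, mul_assoc]
    exact mul_le_mul_of_nonneg_left h1 (abs_nonneg _)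
  set L : E →L[ℝ] ℝ := L₀.mkContinuous (|Sv0| * I0) hL₀bound with hLdef
  have hLapp : ∀ B : E, L B = Sv0 * ∫ p, kk p * (B : ℝ → ℝ) p.2 ∂(ν.prod ν) := fun B => rfl
  -- the L¹ density f₀ and its Lp element f
  set G2 : ℝ → ℝ := fun x => ∫ u in (0:ℝ)..x, μh u with hG2def
  have hG2c : Continuous G2 := intervalIntegral.continuous_primitive hμhii 0
  have hsh0m : Measurable sh0 := by
    have : sh0 = fun a => Λh * exp (-(G2 a)) := by funext a; rw [hsh0 a]
    rw [this]
    exact measurable_const.mul (Real.continuous_exp.comp hG2c.neg).measurable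
  have hsh0pos : ∀ a, 0 < sh0 a := fun a => by rw [hsh0 a]; positivity
  have hsh0le : ∀ a ∈ Ioi (0:ℝ), sh0 a ≤ Λh * exp (-μ0 * a) := by
    intro a ha
    rw [hsh0 a]
    refine mul_le_mul_of_nonneg_left ?_ hΛh.le
    rw [exp_le_exp]
    have := hμh_int_lb a (le_of_lt ha)
    linarith
  set f₀ : ℝ → ℝ := fun a => βv a * sh0 a / μv with hf₀def
  have hf₀m : Measurable f₀ := (hβvm.mul hsh0m).div_const μv
  have hf₀nn : ∀ a, 0 ≤ f₀ a := fun a => div_nonneg (mul_nonneg (hβv0 a) (hsh0pos a).le) hμv.le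
  have hBβv0 : 0 ≤ Bβv := le_trans (hβv0 0) (hβvB 0)
  have hf₀i : Integrable f₀ ν := by
    refine Integrable.mono' ((exp_neg_integrableOn_Ioi 0 hμ0).const_mul (Bβv * Λh / μv))
      hf₀m.aestronglyMeasurable ?_
    rw [hν]
    filter_upwards [ae_restrict_mem measurableSet_Ioi] with a ha
    rw [Real.norm_eq_abs, abs_of_nonneg (hf₀nn a)]
    have h1 : βv a * sh0 a ≤ Bβv * (Λh * exp (-μ0 * a)) :=
      mul_le_mul (hβvB a) (hsh0le a ha) (hsh0pos a).le hBβv0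
    rw [show Bβv * Λh / μv * exp (-μ0 * a) = Bβv * (Λh * exp (-μ0 * a)) / μv by ring]
    show βv a * sh0 a / μv ≤ _
    gcongr
  have hfmem : MemLp f₀ 1 ν := memLp_one_iff_integrable.mpr hf₀i
  set f : E := hfmem.toLp f₀ with hfdef
  have hfcoe : ⇑f =ᵐ[ν] f₀ := hfmem.coeFn_toLp
  -- f is not zero
  have hβv_ne : ¬ (βv =ᵐ[ν] 0) := by
    intro h
    have houter : (fun a => ∫ s in Ioi (0:ℝ), βh (a+s) * βv a * exp (-μ0 * (a+s)))
        =ᵐ[ν] 0 := by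
      filter_upwards [h] with a ha
      simp only [Pi.zero_apply] at ha ⊢
      simp [ha]
    rw [integral_congr_ae houter] at hirr
    simp at hirr
  have hfne : f ≠ 0 := by
    intro h
    apply hβv_ne
    have h0 : f₀ =ᵐ[ν] 0 := by
      have hz : ⇑f =ᵐ[ν] 0 := by rw [h]; exact Lp.coeFn_zero ℝ 1 ν
      exact hfcoe.symm.trans hz
    filter_upwards [h0] with a ha
    simp only [hf₀def, Pi.zero_apply] at ha ⊢
    have h2 : βv a * sh0 a = 0 := by
      field_simp at ha
      simpa using ha
    rcases mul_eq_zero.mp h2 with h3 | h3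
    · exact h3
    · exact absurd h3 (ne_of_gt (hsh0pos a))
  -- the scalar c = R0²
  set c : ℝ := Sv0 * ∫ p, kk p * f₀ p.2 ∂(ν.prod ν) with hcdef
  have hLf : L f = c := by
    rw [hLapp, hcdef]
    congr 1
    refine integral_congr_ae ?_
    filter_upwards [Measure.QuasiMeasurePreserving.ae_eq
      Measure.quasiMeasurePreserving_snd hfcoe] with p hp
    simp only [Function.comp] at hp
    rw [hp]
  have hSv0pos : 0 < Sv0 := hSv0def ▸ div_pos hΛv hμv
  have hc0 : 0 ≤ c :=
    mul_nonneg hSv0pos.le (integral_nonneg fun p => mul_nonneg (hkknn p) (hf₀nn _))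
  have hYc : Sv0 / μv * (∫ s in Ioi (0:ℝ), ∫ ξ in Ioi (0:ℝ),
      βh (ξ+s) * βv ξ * sh0 ξ * exp (-(∫ u in ξ..(ξ+s), (μh u + r1 u + δ u)))) = c := by
    have hinner : ∀ s : ℝ, (∫ ξ in Ioi (0:ℝ),
        βh (ξ+s) * βv ξ * sh0 ξ * exp (-(∫ u in ξ..(ξ+s), (μh u + r1 u + δ u))))
        = μv * ∫ ξ in Ioi (0:ℝ), βh (ξ+s) * exp (-(∫ u in ξ..(ξ+s), F u)) * f₀ ξ := by
      intro s
      rw [← integral_const_mul]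
      refine integral_congr_ae (ae_of_all _ fun ξ => ?_)
      dsimp only
      have hexpeq : (∫ u in ξ..(ξ+s), (μh u + r1 u + δ u)) = ∫ u in ξ..(ξ+s), F u :=
        intervalIntegral.integral_congr (fun u _ => by show _ = μh u + δ u + r1 u; ring)
      rw [hexpeq]
      show βh (ξ+s) * βv ξ * sh0 ξ * exp _ = μv * (βh (ξ+s) * exp _ * (βv ξ * sh0 ξ / μv))
      field_simp
    have houter : (∫ s in Ioi (0:ℝ), ∫ ξ in Ioi (0:ℝ),
        βh (ξ+s) * βv ξ * sh0 ξ * exp (-(∫ u in ξ..(ξ+s), (μh u + r1 u + δ u))))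
        = μv * ∫ s in Ioi (0:ℝ), ∫ ξ in Ioi (0:ℝ),
          βh (ξ+s) * exp (-(∫ u in ξ..(ξ+s), F u)) * f₀ ξ := by
      rw [← integral_const_mul]
      exact integral_congr_ae (ae_of_all _ fun s => hinner s)
    rw [houter, hiter f₀ hf₀m.aestronglyMeasurable hf₀i, hcdef]
    field_simp
  have hcsqrt : R0 = Real.sqrt c := by rw [hR0, hYc]
  -- the operator K
  set A : (ℝ × ℝ) →L[ℝ] (E × ℝ) :=
    (ContinuousLinearMap.smulRight (ContinuousLinearMap.fst ℝ ℝ ℝ) f).prod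
      (ContinuousLinearMap.snd ℝ ℝ ℝ) with hAdef
  set Pr : (E × ℝ) →L[ℝ] (ℝ × ℝ) :=
    (ContinuousLinearMap.snd ℝ E ℝ).prod (L.comp (ContinuousLinearMap.fst ℝ E ℝ)) with hPrdef
  set K : (E × ℝ) →L[ℝ] (E × ℝ) := A.comp Pr with hKdef
  have hKapp : ∀ B : E × ℝ, K B = (B.2 • f, L B.1) := fun B => rfl
  refine ⟨K, fun B => ⟨?_, ?_⟩, ?_, ?_⟩
  · -- first component formula
    rw [hKapp]
    filter_upwards [Lp.coeFn_smul B.2 f, hfcoe] with a h1 h2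
    rw [show ((B.2 • f : E) : ℝ → ℝ) a = (B.2 • (f : ℝ → ℝ)) a from h1]
    simp only [Pi.smul_apply, smul_eq_mul, h2]
    show B.2 * (βv a * sh0 a / μv) = βv a * sh0 a * B.2 / μv
    ring
  · -- second component formula
    rw [hKapp, hLapp,
      ← hiter (⇑B.1) (Lp.aestronglyMeasurable B.1) (L1.integrable_coeFn B.1)]
    refine congrArg (fun t => Sv0 * t) ?_
    refine integral_congr_ae (ae_of_all _ fun s => ?_)
    refine integral_congr_ae (ae_of_all _ fun ξ => ?_)
    dsimp only
    ring
  · -- compactness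
    have hcomp : IsCompactOperator (⇑A) :=
      ⟨A '' Metric.closedBall 0 1, (isCompact_closedBall 0 1).image A.continuous,
        Filter.mem_of_superset (Metric.closedBall_mem_nhds 0 one_pos)
          (Set.subset_preimage_image _ _)⟩
    exact hcomp.comp_clm Pr
  · -- spectral radius
    have hTapp : ∀ z : ℝ, ∀ x : E × ℝ,
        (algebraMap ℝ ((E × ℝ) →L[ℝ] (E × ℝ)) z - K) x
          = (z • x.1 - x.2 • f, z * x.2 - L x.1) := by
      intro z x
      rw [ContinuousLinearMap.sub_apply, Algebra.algebraMap_eq_smul_one,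
        ContinuousLinearMap.smul_apply, ContinuousLinearMap.one_apply, hKapp]
      rfl
    have hunit : ∀ z : ℝ, z ≠ 0 → z^2 ≠ c →
        IsUnit (algebraMap ℝ ((E × ℝ) →L[ℝ] (E × ℝ)) z - K) := by
      intro z hz hz2
      have hd : z^2 - c ≠ 0 := sub_ne_zero.mpr hz2
      set g : (E × ℝ) →L[ℝ] ℝ := (z^2 - c)⁻¹ •
        (z • ContinuousLinearMap.snd ℝ E ℝ + L.comp (ContinuousLinearMap.fst ℝ E ℝ))
        with hgdef
      have hgapp : ∀ x : E × ℝ, g x = (z^2 - c)⁻¹ * (z * x.2 + L x.1) := by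
        intro x
        simp [hgdef, smul_eq_mul]
        ring
      set M : (E × ℝ) →L[ℝ] (E × ℝ) :=
        ((z⁻¹ • ContinuousLinearMap.fst ℝ E ℝ)
          + ContinuousLinearMap.smulRight (z⁻¹ • g) f).prod g with hMdef
      have hMapp : ∀ y : E × ℝ, M y = (z⁻¹ • y.1 + (z⁻¹ * g y) • f, g y) := by
        intro y
        simp only [hMdef, ContinuousLinearMap.prod_apply, ContinuousLinearMap.add_apply,
          ContinuousLinearMap.smul_apply, ContinuousLinearMap.coe_fst',
          ContinuousLinearMap.smulRight_apply, smul_eq_mul]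
      refine isUnit_iff_exists.mpr ⟨M, ?_, ?_⟩
      · -- (z•1 - K) * M = 1
        refine ContinuousLinearMap.ext fun y => ?_
        rw [ContinuousLinearMap.mul_apply, ContinuousLinearMap.one_apply, hMapp, hTapp]
        have hgy : g y = (z^2 - c)⁻¹ * (z * y.2 + L y.1) := hgapp y
        refine Prod.ext ?_ ?_
        · show z • (z⁻¹ • y.1 + (z⁻¹ * g y) • f) - (g y) • f = y.1
          rw [smul_add, smul_smul, smul_smul, mul_inv_cancel₀ hz, one_smul]
          have h2 : z * (z⁻¹ * g y) = g y := by field_simp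
          rw [h2, add_sub_cancel_right]
        · show z * g y - L (z⁻¹ • y.1 + (z⁻¹ * g y) • f) = y.2
          rw [map_add, L.map_smul, L.map_smul, hLf, hgy]
          simp only [smul_eq_mul]
          field_simp
          ring
      · -- M * (z•1 - K) = 1
        refine ContinuousLinearMap.ext fun x => ?_
        rw [ContinuousLinearMap.mul_apply, ContinuousLinearMap.one_apply, hTapp, hMapp]
        have hg1 : g (z • x.1 - x.2 • f, z * x.2 - L x.1) = x.2 := by
          rw [hgapp]
          simp only [map_sub, L.map_smul, hLf, smul_eq_mul]
          field_simp
          ring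
        refine Prod.ext ?_ ?_
        · show z⁻¹ • (z • x.1 - x.2 • f) + (z⁻¹ * g _) • f = x.1
          rw [hg1, smul_sub, smul_smul, inv_mul_cancel₀ hz, one_smul, smul_smul,
            sub_add_cancel]
        · exact hg1
    have hmemspec : ∀ z : ℝ, z^2 = c → z ∈ spectrum ℝ K := by
      intro z hz
      rw [spectrum.mem_iff]
      intro hu
      have hvec : (algebraMap ℝ ((E × ℝ) →L[ℝ] (E × ℝ)) z - K) (f, z) = 0 := by
        rw [hTapp]
        refine Prod.ext ?_ ?_
        · show z • f - z • f = 0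
          rw [sub_self]
        · show z * z - L f = 0
          rw [hLf, ← sq, hz, sub_self]
      obtain ⟨u, hu'⟩ := hu
      have h1 : (f, z) = ((↑u⁻¹ * ↑u : (E × ℝ) →L[ℝ] (E × ℝ))) (f, z) := by
        rw [u.inv_mul]
        rfl
      rw [ContinuousLinearMap.mul_apply, hu', hvec, map_zero] at h1
      exact hfne (congrArg Prod.fst h1)
    have hsr : spectralRadius ℝ K = ENNReal.ofReal (Real.sqrt c) := by
      refine le_antisymm ?_ ?_
      · rw [spectralRadius]
        refine iSup₂_le fun z hz => ?_
        rcases eq_or_ne z 0 with rfl | hz0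
        · simp
        · have hz2 : z^2 = c := by
            by_contra h
            exact spectrum.mem_iff.mp hz (hunit z hz0 h)
          have habs : |z| = Real.sqrt c := by rw [← hz2, Real.sqrt_sq_eq_abs]
          rw [← enorm_eq_nnnorm, Real.enorm_eq_ofReal_abs, habs]
      · have hm := hmemspec (Real.sqrt c) (Real.sq_sqrt hc0)
        have h2 : ENNReal.ofReal (Real.sqrt c) = (‖Real.sqrt c‖₊ : ENNReal) := by
          rw [← enorm_eq_nnnorm, Real.enorm_eq_ofReal_abs, abs_of_nonneg (Real.sqrt_nonneg c)]
        rw [h2, spectralRadius]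
        exact le_iSup₂ (f := fun z (_ : z ∈ spectrum ℝ K) => (‖z‖₊ : ENNReal)) _ hm
    rw [hsr, hcsqrt]
end

section
/- Let F_1 : L^1(0,∞) → L^1(0,∞) be the continuous linear operator defined by F_1(B)(a) = β_v(a)·s_h^0(a)·(S_v^0/μ_v)·∫_0^∞ ∫_0^∞ β_h(ξ+s)·B(ξ)·exp(-∫_ξ^{ξ+s}(μ_h(u)+r_1(u)+δ(u))du) dξ ds. Then F_1 is well defined and bounded, the function a ↦ β_v(a)·s_h^0(a) is an eigenfunction of F_1 with eigenvalue R_0², and the spectral radius of F_1 equals R_0². -/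
open MeasureTheory Real Set

theorem aux_rank_one_spectralRadius {E : Type*} [NormedAddCommGroup E] [NormedSpace ℝ E]
    (T : E →L[ℝ] E) (φ : E) (hφ : φ ≠ 0) (lam : ℝ) (hlam : 0 ≤ lam)
    (heig : T φ = lam • φ) (hsq : T.comp T = lam • T) :
    spectralRadius ℝ T = ENNReal.ofReal lam := by
  have hnE : Nontrivial E := ⟨⟨φ, 0, hφ⟩⟩
  have hnA : Nontrivial (E →L[ℝ] E) := by
    refine ⟨⟨1, 0, fun h => hφ ?_⟩⟩
    have := DFunLike.congr_fun h φ
    simpa using this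
  have hmem : lam ∈ spectrum ℝ T := by
    rw [spectrum.mem_iff]
    intro hunit
    have h0 : (algebraMap ℝ (E →L[ℝ] E) lam - T) φ = 0 := by
      simp [Algebra.algebraMap_eq_smul_one, heig]
    have h1 : φ = 0 := by
      have h2 := hunit.unit.inv_mul
      have h3 : (↑hunit.unit⁻¹ * ↑hunit.unit : E →L[ℝ] E) φ = φ := by
        rw [h2]; simp
      rw [ContinuousLinearMap.mul_apply, IsUnit.unit_spec, h0, map_zero] at h3
      exact h3.symm
    exact hφ h1
  have hsub : spectrum ℝ T ⊆ {0, lam} := by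
    intro k hk
    have hp := spectrum.subset_polynomial_aeval T
      (Polynomial.X ^ 2 - Polynomial.C lam * Polynomial.X) ⟨k, hk, rfl⟩
    have haev : (Polynomial.aeval T) (Polynomial.X ^ 2 - Polynomial.C lam * Polynomial.X)
        = 0 := by
      simp only [map_sub, map_mul, map_pow, Polynomial.aeval_X, Polynomial.aeval_C]
      rw [sub_eq_zero, ← Algebra.smul_def, pow_two, ContinuousLinearMap.mul_def, hsq]
    rw [haev, spectrum.zero_eq] at hp
    simp only [Polynomial.eval_sub, Polynomial.eval_pow, Polynomial.eval_mul,
      Polynomial.eval_X, Polynomial.eval_C, Set.mem_singleton_iff, sub_eq_zero, pow_two] at hp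
    rcases mul_eq_mul_right_iff.mp hp.symm with h | h
    · right; exact h.symm ▸ rfl
    · left; exact h
  apply le_antisymm
  · refine iSup₂_le fun k hk => ?_
    rcases hsub hk with h | h
    · simp [h]
    · simp only [Set.mem_singleton_iff] at h
      subst h
      rw [← enorm_eq_nnnorm, ← ofReal_norm, Real.norm_of_nonneg hlam]
  · rw [← Real.norm_of_nonneg hlam, ofReal_norm, enorm_eq_nnnorm]
    exact le_iSup₂ (f := fun k (_ : k ∈ spectrum ℝ T) => (‖k‖₊ : ENNReal)) lam hmem

/-- The human-to-human block `F₁` of the square of the next generation operator of the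
age-structured SIRS/SI malaria model is a bounded operator on `L¹(0,∞)`, has
`a ↦ β_v(a)·s_h⁰(a)` as eigenfunction with eigenvalue `R₀²`, and its spectral radius
equals `R₀²`. -/
theorem F1_eigenvalue_and_spectral_radius
    (Λh Λv μv μ0 : ℝ)
    (μh δ r1 r2 βh βv : ℝ → ℝ)
    (hΛh : 0 < Λh) (hΛv : 0 < Λv) (hμv : 0 < μv) (hμ0 : 0 < μ0)
    (hμhm : Measurable μh) (hδm : Measurable δ) (hr1m : Measurable r1)
    (hr2m : Measurable r2) (hβhm : Measurable βh) (hβvm : Measurable βv)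
    (hμh_lb : ∀ a, μ0 ≤ μh a) (hμv_lb : μ0 ≤ μv)
    (hδ0 : ∀ a, 0 ≤ δ a) (hr10 : ∀ a, 0 ≤ r1 a) (hr20 : ∀ a, 0 ≤ r2 a)
    (hβh0 : ∀ a, 0 ≤ βh a) (hβv0 : ∀ a, 0 ≤ βv a)
    (Bμh Bδ Br1 Br2 Bβh Bβv : ℝ)
    (hμhB : ∀ a, μh a ≤ Bμh) (hδB : ∀ a, δ a ≤ Bδ) (hr1B : ∀ a, r1 a ≤ Br1)
    (hr2B : ∀ a, r2 a ≤ Br2) (hβhB : ∀ a, βh a ≤ Bβh) (hβvB : ∀ a, βv a ≤ Bβv)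
    (hirr : 0 < ∫ a in Ioi (0:ℝ), ∫ s in Ioi (0:ℝ), βh (a+s) * βv a * exp (-μ0 * (a+s)))
    (sh0 : ℝ → ℝ) (hsh0 : ∀ a, sh0 a = Λh * exp (-(∫ u in (0:ℝ)..a, μh u)))
    (Sv0 : ℝ) (hSv0def : Sv0 = Λv / μv)
    (R0 : ℝ)
    (hR0 : R0 = Real.sqrt ((Sv0 / μv) * ∫ s in Ioi (0:ℝ), ∫ ξ in Ioi (0:ℝ),
      βh (ξ+s) * βv ξ * sh0 ξ * exp (-(∫ u in ξ..(ξ+s), (μh u + r1 u + δ u))))) :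
    ∃ F1 : Lp ℝ 1 (volume.restrict (Ioi (0:ℝ))) →L[ℝ]
           Lp ℝ 1 (volume.restrict (Ioi (0:ℝ))),
      (∀ B : Lp ℝ 1 (volume.restrict (Ioi (0:ℝ))),
        ⇑(F1 B) =ᵐ[volume.restrict (Ioi (0:ℝ))]
          fun a => βv a * sh0 a * ((Sv0 / μv) * ∫ s in Ioi (0:ℝ), ∫ ξ in Ioi (0:ℝ),
            βh (ξ+s) * (B : ℝ → ℝ) ξ * exp (-(∫ u in ξ..(ξ+s), (μh u + r1 u + δ u))))) ∧
      (∃ φ : Lp ℝ 1 (volume.restrict (Ioi (0:ℝ))),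
        (⇑φ =ᵐ[volume.restrict (Ioi (0:ℝ))] fun a => βv a * sh0 a) ∧
        F1 φ = (R0 ^ 2) • φ) ∧
      spectralRadius ℝ F1 = ENNReal.ofReal (R0 ^ 2) := by
  classical
  set g : ℝ → ℝ := fun u => μh u + r1 u + δ u with hgdef
  set C := Bμh + Br1 + Bδ with hCdef
  have hBβh0 : 0 ≤ Bβh := le_trans (hβh0 0) (hβhB 0)
  have hBβv0 : 0 ≤ Bβv := le_trans (hβv0 0) (hβvB 0)
  have hgm : Measurable g := (hμhm.add hr1m).add hδm
  have hg_lb : ∀ u, μ0 ≤ g u := by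
    intro u
    have h1 := hμh_lb u; have h2 := hr10 u; have h3 := hδ0 u
    simp only [hgdef]; linarith
  have hg_ub : ∀ u, g u ≤ C := by
    intro u
    have h1 := hμhB u; have h2 := hr1B u; have h3 := hδB u
    simp only [hgdef, hCdef]; linarith
  have hgnn : ∀ u, 0 ≤ g u := fun u => le_trans hμ0.le (hg_lb u)
  -- interval integrability of bounded measurable functions
  have hii : ∀ (f : ℝ → ℝ) (D : ℝ), Measurable f → (∀ u, ‖f u‖ ≤ D) →
      ∀ a b : ℝ, IntervalIntegrable f volume a b := by
    intro f D hf hbd a b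
    rw [intervalIntegrable_iff]
    refine Measure.integrableOn_of_bounded (M := D) ?_ hf.aestronglyMeasurable ?_
    · exact (measure_Ioc_lt_top).ne
    · exact Filter.Eventually.of_forall fun x => hbd x
  have hiig : ∀ a b : ℝ, IntervalIntegrable g volume a b :=
    hii g C hgm (fun u => by rw [Real.norm_eq_abs, abs_of_nonneg (hgnn u)]; exact hg_ub u)
  have hiiμh : ∀ a b : ℝ, IntervalIntegrable μh volume a b :=
    hii μh Bμh hμhm (fun u => by
      rw [Real.norm_eq_abs, abs_of_nonneg (le_trans hμ0.le (hμh_lb u))]; exact hμhB u)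
  -- primitive of g
  set G : ℝ → ℝ := fun x => ∫ u in (0:ℝ)..x, g u with hGdef
  have hGc : Continuous G := intervalIntegral.continuous_primitive hiig 0
  have hsplit : ∀ ξ s : ℝ, (∫ u in ξ..(ξ+s), g u) = G (ξ+s) - G ξ := by
    intro ξ s
    have h1 := intervalIntegral.integral_add_adjacent_intervals (hiig 0 ξ) (hiig ξ (ξ+s))
    simp only [hGdef]
    linarith
  -- bounds on the interval integral
  have hIlb : ∀ ξ s : ℝ, 0 ≤ s → μ0 * s ≤ ∫ u in ξ..(ξ+s), g u := by
    intro ξ s hs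
    have h1 := intervalIntegral.integral_mono_on (μ := volume)
      (f := fun _ => μ0) (g := g) (by linarith : ξ ≤ ξ + s)
      intervalIntegrable_const (hiig ξ (ξ+s)) (fun x _ => hg_lb x)
    simp only [intervalIntegral.integral_const, smul_eq_mul, add_sub_cancel_left] at h1
    linarith
  have hElb : ∀ ξ s : ℝ, 0 ≤ s →
      exp (-(∫ u in ξ..(ξ+s), g u)) ≤ exp (-(μ0 * s)) := by
    intro ξ s hs
    exact exp_le_exp.mpr (neg_le_neg (hIlb ξ s hs))
  -- measurability of the kernel (in both variable orders)
  have hEm1 : Measurable (fun z : ℝ × ℝ => exp (-(∫ u in z.2..(z.2+z.1), g u))) := by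
    have he : (fun z : ℝ × ℝ => exp (-(∫ u in z.2..(z.2+z.1), g u)))
        = fun z => exp (G z.2 - G (z.2+z.1)) := by
      funext z; rw [hsplit, neg_sub]
    rw [he]
    exact (continuous_exp.comp ((hGc.comp continuous_snd).sub
      (hGc.comp (continuous_snd.add continuous_fst)))).measurable
  have hEm2 : Measurable (fun z : ℝ × ℝ => exp (-(∫ u in z.1..(z.1+z.2), g u))) := by
    have he : (fun z : ℝ × ℝ => exp (-(∫ u in z.1..(z.1+z.2), g u)))
        = fun z => exp (G z.1 - G (z.1+z.2)) := by
      funext z; rw [hsplit, neg_sub]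
    rw [he]
    exact (continuous_exp.comp ((hGc.comp continuous_fst).sub
      (hGc.comp (continuous_fst.add continuous_snd)))).measurable
  -- the dominating exponential
  have hexpI : Integrable (fun s => exp (-(μ0 * s))) (volume.restrict (Ioi (0:ℝ))) := by
    have h1 : IntegrableOn (fun s => exp (-(μ0 * s))) (Ioi (0:ℝ)) volume := by
      simpa [neg_mul] using exp_neg_integrableOn_Ioi 0 hμ0
    exact h1
  -- inner kernel integrability for each ξ
  have hKint : ∀ ξ : ℝ,
      Integrable (fun s => βh (ξ+s) * exp (-(∫ u in ξ..(ξ+s), g u)))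
        (volume.restrict (Ioi (0:ℝ))) := by
    intro ξ
    refine (hexpI.const_mul Bβh).mono ?_ ?_
    · exact ((hβhm.comp (measurable_const.add measurable_id)).mul
        (hEm1.comp (measurable_id.prodMk measurable_const))).aestronglyMeasurable
    · filter_upwards [ae_restrict_mem measurableSet_Ioi] with s hs
      rw [Real.norm_eq_abs, Real.norm_eq_abs, abs_mul,
        abs_of_nonneg (hβh0 _), abs_of_nonneg (exp_pos _).le,
        abs_of_nonneg (mul_nonneg hBβh0 (exp_pos _).le)]
      exact mul_le_mul (hβhB _) (hElb ξ s (le_of_lt hs)) (exp_pos _).le hBβh0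
  -- the reduced kernel K
  set K : ℝ → ℝ := fun ξ => ∫ s in Ioi (0:ℝ), βh (ξ+s) * exp (-(∫ u in ξ..(ξ+s), g u))
    with hKdef
  set M := Bβh * ∫ s in Ioi (0:ℝ), exp (-(μ0 * s)) with hMdef
  have hMnn : 0 ≤ M :=
    mul_nonneg hBβh0 (integral_nonneg fun s => (exp_pos _).le)
  have hK_nonneg : ∀ ξ, 0 ≤ K ξ := fun ξ =>
    integral_nonneg fun s => mul_nonneg (hβh0 _) (exp_pos _).le
  have hK_le : ∀ ξ, K ξ ≤ M := by
    intro ξ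
    have h1 : (∫ s in Ioi (0:ℝ), βh (ξ+s) * exp (-(∫ u in ξ..(ξ+s), g u)))
        ≤ ∫ s in Ioi (0:ℝ), Bβh * exp (-(μ0 * s)) := by
      refine integral_mono_ae (hKint ξ) (hexpI.const_mul Bβh) ?_
      filter_upwards [ae_restrict_mem measurableSet_Ioi] with s hs
      exact mul_le_mul (hβhB _) (hElb ξ s (le_of_lt hs)) (exp_pos _).le hBβh0
    calc K ξ ≤ ∫ s in Ioi (0:ℝ), Bβh * exp (-(μ0 * s)) := h1
      _ = M := by rw [hMdef, integral_const_mul]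
  have hKm : Measurable K := by
    have h1 : StronglyMeasurable
        (fun z : ℝ × ℝ => βh (z.1+z.2) * exp (-(∫ u in z.1..(z.1+z.2), g u))) :=
      ((hβhm.comp measurable_add).mul hEm2).stronglyMeasurable
    exact h1.integral_prod_right'.measurable
  -- the eigenfunction candidate
  have hsh0m : Measurable sh0 := by
    have he : sh0 = fun a => Λh * exp (-(∫ u in (0:ℝ)..a, μh u)) := funext hsh0
    rw [he]
    exact (continuous_const.mul (continuous_exp.comp
      (intervalIntegral.continuous_primitive hiiμh 0).neg)).measurable
  have hsh0pos : ∀ a, 0 < sh0 a := by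
    intro a; rw [hsh0 a]; positivity
  have hsh0le : ∀ a, 0 ≤ a → sh0 a ≤ Λh * exp (-(μ0 * a)) := by
    intro a ha
    rw [hsh0 a]
    refine mul_le_mul_of_nonneg_left (exp_le_exp.mpr (neg_le_neg ?_)) hΛh.le
    have h1 := intervalIntegral.integral_mono_on (μ := volume)
      (f := fun _ => μ0) (g := μh) ha intervalIntegrable_const (hiiμh 0 a)
      (fun x _ => hμh_lb x)
    simp only [intervalIntegral.integral_const, smul_eq_mul, sub_zero] at h1
    linarith
  have hpInt : Integrable (fun a => βv a * sh0 a) (volume.restrict (Ioi (0:ℝ))) := by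
    refine (hexpI.const_mul (Bβv * Λh)).mono
      ((hβvm.mul hsh0m).aestronglyMeasurable) ?_
    filter_upwards [ae_restrict_mem measurableSet_Ioi] with a ha
    rw [Real.norm_eq_abs, Real.norm_eq_abs, abs_mul,
      abs_of_nonneg (hβv0 _), abs_of_nonneg (hsh0pos _).le,
      abs_of_nonneg (mul_nonneg (mul_nonneg hBβv0 hΛh.le) (exp_pos _).le)]
    calc βv a * sh0 a ≤ Bβv * (Λh * exp (-(μ0 * a))) :=
          mul_le_mul (hβvB _) (hsh0le a (le_of_lt ha)) (hsh0pos _).le hBβv0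
      _ = Bβv * Λh * exp (-(μ0 * a)) := by ring
  have hpMem : MemLp (fun a => βv a * sh0 a) 1 (volume.restrict (Ioi (0:ℝ))) :=
    memLp_one_iff_integrable.mpr hpInt
  set φ : Lp ℝ 1 (volume.restrict (Ioi (0:ℝ))) := hpMem.toLp _ with hφdef
  have hφcoe : ⇑φ =ᵐ[volume.restrict (Ioi (0:ℝ))] fun a => βv a * sh0 a := hpMem.coeFn_toLp
  -- the constant c0
  set c0 := Sv0 / μv with hc0def
  have hc0pos : 0 < c0 := by
    rw [hc0def, hSv0def]; positivity
  -- integrability of K * f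
  have hint_mul : ∀ f : ℝ → ℝ, Integrable f (volume.restrict (Ioi (0:ℝ))) →
      Integrable (fun ξ => K ξ * f ξ) (volume.restrict (Ioi (0:ℝ))) := by
    intro f hf
    refine hf.bdd_mul (c := M) hKm.aestronglyMeasurable ?_
    exact Filter.Eventually.of_forall fun ξ => by
      rw [Real.norm_eq_abs, abs_of_nonneg (hK_nonneg ξ)]; exact hK_le ξ
  -- the linear functional
  set ℓlin : Lp ℝ 1 (volume.restrict (Ioi (0:ℝ))) →ₗ[ℝ] ℝ :=
    { toFun := fun B => c0 * ∫ ξ in Ioi (0:ℝ), K ξ * B ξ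
      map_add' := by
        intro B B'
        have h1 : (fun ξ => K ξ * (⇑(B + B')) ξ) =ᵐ[volume.restrict (Ioi (0:ℝ))]
            fun ξ => K ξ * B ξ + K ξ * B' ξ := by
          filter_upwards [Lp.coeFn_add B B'] with ξ hξ
          rw [hξ, Pi.add_apply, mul_add]
        rw [integral_congr_ae h1,
          integral_add (hint_mul _ (L1.integrable_coeFn B)) (hint_mul _ (L1.integrable_coeFn B'))]
        ring
      map_smul' := by
        intro r B
        have h1 : (fun ξ => K ξ * (⇑(r • B)) ξ) =ᵐ[volume.restrict (Ioi (0:ℝ))]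
            fun ξ => r * (K ξ * B ξ) := by
          filter_upwards [Lp.coeFn_smul r B] with ξ hξ
          rw [hξ, Pi.smul_apply, smul_eq_mul]; ring
        rw [integral_congr_ae h1, integral_const_mul]
        simp only [RingHom.id_apply, smul_eq_mul]; ring } with hℓlindef
  have hℓbound : ∀ B : Lp ℝ 1 (volume.restrict (Ioi (0:ℝ))), ‖ℓlin B‖ ≤ (c0 * M) * ‖B‖ := by
    intro B
    have h1 : ‖∫ ξ in Ioi (0:ℝ), K ξ * B ξ‖ ≤ ∫ ξ in Ioi (0:ℝ), M * ‖B ξ‖ := by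
      refine le_trans (norm_integral_le_integral_norm _) ?_
      refine integral_mono_ae (hint_mul _ (L1.integrable_coeFn B)).norm
        (((L1.integrable_coeFn B).norm.const_mul M)) ?_
      refine Filter.Eventually.of_forall fun ξ => ?_
      show ‖K ξ * B ξ‖ ≤ M * ‖B ξ‖
      rw [Real.norm_eq_abs, Real.norm_eq_abs, abs_mul, abs_of_nonneg (hK_nonneg ξ)]
      exact mul_le_mul_of_nonneg_right (hK_le ξ) (abs_nonneg _)
    have h2 : (∫ ξ in Ioi (0:ℝ), M * ‖B ξ‖) = M * ‖B‖ := by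
      rw [integral_const_mul, ← L1.norm_eq_integral_norm]
    have h3 : ‖ℓlin B‖ = c0 * ‖∫ ξ in Ioi (0:ℝ), K ξ * B ξ‖ := by
      simp only [hℓlindef, LinearMap.coe_mk, AddHom.coe_mk]
      rw [Real.norm_eq_abs, Real.norm_eq_abs, abs_mul, abs_of_nonneg hc0pos.le]
    rw [h3]
    calc c0 * ‖∫ ξ in Ioi (0:ℝ), K ξ * B ξ‖ ≤ c0 * (M * ‖B‖) :=
          mul_le_mul_of_nonneg_left (le_trans h1 (le_of_eq h2)) hc0pos.le
      _ = (c0 * M) * ‖B‖ := by ring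
  set ℓc : Lp ℝ 1 (volume.restrict (Ioi (0:ℝ))) →L[ℝ] ℝ :=
    ℓlin.mkContinuous (c0 * M) hℓbound with hℓcdef
  have hℓc_apply : ∀ B : Lp ℝ 1 (volume.restrict (Ioi (0:ℝ))),
      ℓc B = c0 * ∫ ξ in Ioi (0:ℝ), K ξ * B ξ := fun B => rfl
  -- Fubini key identity
  have key : ∀ f : ℝ → ℝ, AEStronglyMeasurable f (volume.restrict (Ioi (0:ℝ))) →
      Integrable f (volume.restrict (Ioi (0:ℝ))) →
      (∫ s in Ioi (0:ℝ), ∫ ξ in Ioi (0:ℝ),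
        βh (ξ+s) * f ξ * exp (-(∫ u in ξ..(ξ+s), g u)))
      = ∫ ξ in Ioi (0:ℝ), K ξ * f ξ := by
    intro f hfm hfi
    have huncurry : Function.uncurry
        (fun s ξ => βh (ξ+s) * f ξ * exp (-(∫ u in ξ..(ξ+s), g u)))
        = fun z : ℝ × ℝ => βh (z.2+z.1) * f z.2 * exp (-(∫ u in z.2..(z.2+z.1), g u)) := rfl
    have hint : Integrable (Function.uncurry
        (fun s ξ => βh (ξ+s) * f ξ * exp (-(∫ u in ξ..(ξ+s), g u))))
        ((volume.restrict (Ioi (0:ℝ))).prod (volume.restrict (Ioi (0:ℝ)))) := by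
      rw [huncurry]
      have hdom : Integrable
          (fun z : ℝ × ℝ => (Bβh * exp (-(μ0 * z.1))) * ‖f z.2‖)
          ((volume.restrict (Ioi (0:ℝ))).prod (volume.restrict (Ioi (0:ℝ)))) :=
        (hexpI.const_mul Bβh).mul_prod hfi.norm
      refine hdom.mono ?_ ?_
      · refine AEStronglyMeasurable.mul (AEStronglyMeasurable.mul ?_ ?_) ?_
        · exact (hβhm.comp (measurable_snd.add measurable_fst)).aestronglyMeasurable
        · exact hfm.comp_quasiMeasurePreserving Measure.quasiMeasurePreserving_snd
        · exact hEm1.aestronglyMeasurable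
      · have hae : ∀ᵐ z : ℝ × ℝ
            ∂((volume.restrict (Ioi (0:ℝ))).prod (volume.restrict (Ioi (0:ℝ)))),
            z ∈ Ioi (0:ℝ) ×ˢ Ioi (0:ℝ) := by
          rw [Measure.prod_restrict]
          exact ae_restrict_mem (measurableSet_Ioi.prod measurableSet_Ioi)
        filter_upwards [hae] with z hz
        obtain ⟨hz1, hz2⟩ := hz
        have hL : ‖βh (z.2+z.1) * f z.2 * exp (-(∫ u in z.2..(z.2+z.1), g u))‖
            = βh (z.2+z.1) * ‖f z.2‖ * exp (-(∫ u in z.2..(z.2+z.1), g u)) := by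
          rw [norm_mul, norm_mul, Real.norm_of_nonneg (hβh0 _),
            Real.norm_of_nonneg (exp_pos _).le]
        have hR : ‖Bβh * exp (-(μ0 * z.1)) * ‖f z.2‖‖
            = Bβh * exp (-(μ0 * z.1)) * ‖f z.2‖ :=
          Real.norm_of_nonneg
            (mul_nonneg (mul_nonneg hBβh0 (exp_pos _).le) (norm_nonneg _))
        rw [hL, hR]
        calc βh (z.2+z.1) * ‖f z.2‖ * exp (-(∫ u in z.2..(z.2+z.1), g u))
            ≤ Bβh * ‖f z.2‖ * exp (-(μ0 * z.1)) :=
              mul_le_mul (mul_le_mul_of_nonneg_right (hβhB _) (norm_nonneg _))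
                (hElb z.2 z.1 (le_of_lt hz1)) (exp_pos _).le
                (mul_nonneg hBβh0 (norm_nonneg _))
          _ = Bβh * exp (-(μ0 * z.1)) * ‖f z.2‖ := by ring
    have hswap := integral_integral_swap hint
    beta_reduce at hswap
    rw [hswap]
    refine integral_congr_ae (Filter.Eventually.of_forall fun ξ => ?_)
    have he : (fun s => βh (ξ+s) * f ξ * exp (-(∫ u in ξ..(ξ+s), g u)))
        = fun s => f ξ * (βh (ξ+s) * exp (-(∫ u in ξ..(ξ+s), g u))) := by
      funext s; ring
    show (∫ s in Ioi (0:ℝ), βh (ξ+s) * f ξ * exp (-(∫ u in ξ..(ξ+s), g u)))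
        = K ξ * f ξ
    rw [he, integral_const_mul, mul_comm]
  -- value of ℓc on any B
  have hℓval : ∀ B : Lp ℝ 1 (volume.restrict (Ioi (0:ℝ))), ℓc B
      = c0 * ∫ s in Ioi (0:ℝ), ∫ ξ in Ioi (0:ℝ),
          βh (ξ+s) * (B : ℝ → ℝ) ξ * exp (-(∫ u in ξ..(ξ+s), g u)) := by
    intro B
    rw [hℓc_apply B, key _ (Lp.aestronglyMeasurable B) (L1.integrable_coeFn B)]
  -- value of ℓc on φ is R0^2
  have hkeyp := key (fun a => βv a * sh0 a) hpInt.aestronglyMeasurable hpInt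
  beta_reduce at hkeyp
  have hXnn : 0 ≤ c0 * ∫ s in Ioi (0:ℝ), ∫ ξ in Ioi (0:ℝ),
      βh (ξ+s) * βv ξ * sh0 ξ * exp (-(∫ u in ξ..(ξ+s), g u)) := by
    refine mul_nonneg hc0pos.le (integral_nonneg fun s => integral_nonneg fun ξ => ?_)
    exact mul_nonneg (mul_nonneg (mul_nonneg (hβh0 _) (hβv0 _)) (hsh0pos _).le)
      (exp_pos _).le
  have hassoc : (∫ s in Ioi (0:ℝ), ∫ ξ in Ioi (0:ℝ),
        βh (ξ+s) * βv ξ * sh0 ξ * exp (-(∫ u in ξ..(ξ+s), g u)))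
      = ∫ s in Ioi (0:ℝ), ∫ ξ in Ioi (0:ℝ),
        βh (ξ+s) * (βv ξ * sh0 ξ) * exp (-(∫ u in ξ..(ξ+s), g u)) := by
    refine integral_congr_ae (Filter.Eventually.of_forall fun s => ?_)
    show (∫ ξ in Ioi (0:ℝ), βh (ξ+s) * βv ξ * sh0 ξ * exp (-(∫ u in ξ..(ξ+s), g u)))
        = ∫ ξ in Ioi (0:ℝ), βh (ξ+s) * (βv ξ * sh0 ξ) * exp (-(∫ u in ξ..(ξ+s), g u))
    refine integral_congr_ae (Filter.Eventually.of_forall fun ξ => ?_)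
    show βh (ξ+s) * βv ξ * sh0 ξ * exp (-(∫ u in ξ..(ξ+s), g u))
        = βh (ξ+s) * (βv ξ * sh0 ξ) * exp (-(∫ u in ξ..(ξ+s), g u))
    ring
  have hvalφ : ℓc φ = R0 ^ 2 := by
    rw [hR0, sq_sqrt hXnn, hassoc, hkeyp, hℓc_apply φ]
    congr 1
    refine integral_congr_ae ?_
    filter_upwards [hφcoe] with ξ hξ
    rw [hξ]
  have hR0sqnn : (0:ℝ) ≤ R0 ^ 2 := sq_nonneg R0
  -- φ ≠ 0
  have hφne : φ ≠ 0 := by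
    intro h0
    have h1 : (fun a => βv a * sh0 a) =ᵐ[volume.restrict (Ioi (0:ℝ))] 0 := by
      have h2 := hφcoe
      rw [h0] at h2
      exact (h2.symm.trans (Lp.coeFn_zero ℝ 1 (volume.restrict (Ioi (0:ℝ)))))
    have h2 : (fun a => ∫ s in Ioi (0:ℝ), βh (a+s) * βv a * exp (-μ0 * (a+s)))
        =ᵐ[volume.restrict (Ioi (0:ℝ))] 0 := by
      filter_upwards [h1] with a ha
      have hβva : βv a = 0 := by
        have h3 : βv a * sh0 a = 0 := ha
        rcases mul_eq_zero.mp h3 with h | h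
        · exact h
        · exact absurd h (ne_of_gt (hsh0pos a))
      simp [hβva]
    rw [show (∫ a in Ioi (0:ℝ), ∫ s in Ioi (0:ℝ), βh (a+s) * βv a * exp (-μ0 * (a+s)))
        = ∫ a in Ioi (0:ℝ), (0:ℝ→ℝ) a from integral_congr_ae h2] at hirr
    simp at hirr
  -- assemble
  refine ⟨ℓc.smulRight φ, ?_, ⟨φ, hφcoe, ?_⟩, ?_⟩
  · intro B
    have hsm : (ℓc.smulRight φ) B = ℓc B • φ := rfl
    rw [hsm]
    filter_upwards [Lp.coeFn_smul (ℓc B) φ, hφcoe] with a h1 h2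
    rw [h1]
    simp only [Pi.smul_apply, smul_eq_mul, h2, hℓval B]
    ring
  · have hsm : (ℓc.smulRight φ) φ = ℓc φ • φ := rfl
    rw [hsm, hvalφ]
  · refine aux_rank_one_spectralRadius _ φ hφne _ hR0sqnn ?_ ?_
    · have hsm : (ℓc.smulRight φ) φ = ℓc φ • φ := rfl
      rw [hsm, hvalφ]
    · apply ContinuousLinearMap.ext
      intro B
      simp only [ContinuousLinearMap.coe_comp', Function.comp_apply,
        ContinuousLinearMap.smulRight_apply, ContinuousLinearMap.smul_apply]
      rw [_root_.map_smul, hvalφ, smul_eq_mul, smul_smul, mul_comm]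
end

section
/- Define, for real λ ≥ 0, g(λ) = (S_v^0/μ_v)·∫_0^∞ β_h(a)·∫_0^a β_v(s)·s_h^0(s)·exp(-∫_s^a (μ_h(z)+δ(z)+r_1(z)+λ)dz) ds da. Then g is continuous and decreasing on [0,∞), g(0) = R_0², g(λ) → 0 as λ → ∞, and if R_0 > 1 there exists λ > 0 with g(λ) = 1. -/
open MeasureTheory Real Set

set_option maxHeartbeats 1000000 in
/-- Properties of the (real) characteristic function of the linearization of the
age-structured SIRS/SI malaria model at the parasite-free equilibrium: it is
continuous, decreasing, equals `R₀²` at `0`, vanishes at infinity, and if `R₀ > 1`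
it takes the value `1` at some positive `λ`. -/
theorem characteristic_function_real_properties
    (Λh Λv μv μ0 : ℝ)
    (μh δ r1 r2 βh βv : ℝ → ℝ)
    (hΛh : 0 < Λh) (hΛv : 0 < Λv) (hμv : 0 < μv) (hμ0 : 0 < μ0)
    (hμhm : Measurable μh) (hδm : Measurable δ) (hr1m : Measurable r1)
    (hr2m : Measurable r2) (hβhm : Measurable βh) (hβvm : Measurable βv)
    (hμh_lb : ∀ a, μ0 ≤ μh a) (hμv_lb : μ0 ≤ μv)
    (hδ0 : ∀ a, 0 ≤ δ a) (hr10 : ∀ a, 0 ≤ r1 a) (hr20 : ∀ a, 0 ≤ r2 a)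
    (hβh0 : ∀ a, 0 ≤ βh a) (hβv0 : ∀ a, 0 ≤ βv a)
    (Bμh Bδ Br1 Br2 Bβh Bβv : ℝ)
    (hμhB : ∀ a, μh a ≤ Bμh) (hδB : ∀ a, δ a ≤ Bδ) (hr1B : ∀ a, r1 a ≤ Br1)
    (hr2B : ∀ a, r2 a ≤ Br2) (hβhB : ∀ a, βh a ≤ Bβh) (hβvB : ∀ a, βv a ≤ Bβv)
    (sh0 : ℝ → ℝ) (hsh0 : ∀ a, sh0 a = Λh * exp (-(∫ u in (0:ℝ)..a, μh u)))
    (Sv0 : ℝ) (hSv0def : Sv0 = Λv / μv)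
    (R0 : ℝ)
    (hR0 : R0 = Real.sqrt ((Sv0 / μv) * ∫ s in Ioi (0:ℝ), ∫ ξ in Ioi (0:ℝ),
      βh (ξ+s) * βv ξ * sh0 ξ * exp (-(∫ u in ξ..(ξ+s), (μh u + r1 u + δ u)))))
    (g : ℝ → ℝ)
    (hg : ∀ lam, g lam = (Sv0 / μv) * ∫ a in Ioi (0:ℝ), βh a *
      ∫ s in (0:ℝ)..a, βv s * sh0 s * exp (-(∫ z in s..a, (μh z + δ z + r1 z + lam)))) :
    ContinuousOn g (Ici 0) ∧
    AntitoneOn g (Ici 0) ∧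
    g 0 = R0 ^ 2 ∧
    Filter.Tendsto g Filter.atTop (nhds 0) ∧
    (1 < R0 → ∃ lam : ℝ, 0 < lam ∧ g lam = 1) := by
  -- κ and primitives
  set κ : ℝ → ℝ := fun z => μh z + δ z + r1 z with hκdef
  have hκm : Measurable κ := (hμhm.add hδm).add hr1m
  have hκ_lb : ∀ z, μ0 ≤ κ z := fun z => by
    have := hμh_lb z; have := hδ0 z; have := hr10 z; simp only [hκdef]; linarith
  have hκ0 : ∀ z, 0 ≤ κ z := fun z => le_trans hμ0.le (hκ_lb z)
  have hκ_ub : ∀ z, κ z ≤ Bμh + Bδ + Br1 := fun z => by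
    have := hμhB z; have := hδB z; have := hr1B z; simp only [hκdef]; linarith
  have hμh0 : ∀ z, 0 ≤ μh z := fun z => le_trans hμ0.le (hμh_lb z)
  have hIIκ : ∀ a b : ℝ, IntervalIntegrable κ volume a b := by
    intro a b
    refine (intervalIntegrable_const (c := Bμh + Bδ + Br1)).mono_fun'
      hκm.aestronglyMeasurable.restrict (ae_of_all _ fun x => ?_)
    show ‖κ x‖ ≤ Bμh + Bδ + Br1
    rw [Real.norm_eq_abs, abs_of_nonneg (hκ0 x)]; exact hκ_ub x
  have hIIμh : ∀ a b : ℝ, IntervalIntegrable μh volume a b := by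
    intro a b
    refine (intervalIntegrable_const (c := Bμh)).mono_fun'
      hμhm.aestronglyMeasurable.restrict (ae_of_all _ fun x => ?_)
    show ‖μh x‖ ≤ Bμh
    rw [Real.norm_eq_abs, abs_of_nonneg (hμh0 x)]; exact hμhB x
  set P : ℝ → ℝ := fun x => ∫ t in (0:ℝ)..x, κ t with hPdef
  set Q : ℝ → ℝ := fun x => ∫ t in (0:ℝ)..x, μh t with hQdef
  have hPc : Continuous P := intervalIntegral.continuous_primitive hIIκ 0
  have hQc : Continuous Q := intervalIntegral.continuous_primitive hIIμh 0
  have hPsub : ∀ s a : ℝ, (∫ z in s..a, κ z) = P a - P s := fun s a =>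
    (intervalIntegral.integral_interval_sub_left (hIIκ 0 a) (hIIκ 0 s)).symm
  have hsh0Q : ∀ s, sh0 s = Λh * exp (-Q s) := fun s => hsh0 s
  have hsh0nn : ∀ s, 0 ≤ sh0 s := fun s => by rw [hsh0Q s]; positivity
  have hkey : ∀ s a : ℝ, 0 ≤ s → s ≤ a → μ0 * a ≤ Q s + (P a - P s) := by
    intro s a hs hsa
    have h1 : Q a - Q s ≤ P a - P s := by
      rw [← hPsub s a, ← (intervalIntegral.integral_interval_sub_left (hIIμh 0 a) (hIIμh 0 s)).symm]
      exact intervalIntegral.integral_mono_on hsa (hIIμh s a) (hIIκ s a)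
        (fun x _ => by simp only [hκdef]; have := hδ0 x; have := hr10 x; linarith)
    have h2 : μ0 * a ≤ Q a := by
      have : (∫ _t in (0:ℝ)..a, μ0) ≤ ∫ t in (0:ℝ)..a, μh t :=
        intervalIntegral.integral_mono_on (hs.trans hsa) intervalIntegrable_const (hIIμh 0 a)
          (fun x _ => hμh_lb x)
      simpa [intervalIntegral.integral_const, smul_eq_mul, mul_comm] using this
    linarith
  -- core pointwise bound
  set M : ℝ := Bβv * Λh with hMdef
  have hM0 : 0 ≤ M := mul_nonneg ((hβv0 0).trans (hβvB 0)) hΛh.le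
  have hBβh0 : 0 ≤ Bβh := (hβh0 0).trans (hβhB 0)
  have hcore : ∀ s a : ℝ, 0 ≤ s → s ≤ a →
      βv s * sh0 s * exp (-(P a - P s)) ≤ M * exp (-(μ0 * a)) := by
    intro s a hs hsa
    have h1 : sh0 s * exp (-(P a - P s)) = Λh * exp (-(Q s + (P a - P s))) := by
      rw [hsh0Q s, mul_assoc, ← Real.exp_add]; ring_nf
    have h2 : exp (-(Q s + (P a - P s))) ≤ exp (-(μ0 * a)) :=
      Real.exp_le_exp.2 (by linarith [hkey s a hs hsa])
    calc βv s * sh0 s * exp (-(P a - P s)) = βv s * (Λh * exp (-(Q s + (P a - P s)))) := by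
          rw [mul_assoc, h1]
      _ ≤ Bβv * (Λh * exp (-(μ0 * a))) :=
          mul_le_mul (hβvB s) (mul_le_mul_of_nonneg_left h2 hΛh.le)
            (by positivity) ((hβv0 0).trans (hβvB 0))
      _ = M * exp (-(μ0 * a)) := by rw [hMdef]; ring
  have hcore0 : ∀ s a : ℝ, 0 ≤ βv s * sh0 s * exp (-(P a - P s)) := by
    intro s a; have := hβv0 s; have := hsh0nn s; positivity
  -- the function F
  set F : ℝ → ℝ → ℝ → ℝ := fun lam a s =>
    βv s * sh0 s * exp (-(P a - P s) - lam * (a - s)) with hFdef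
  have hFsplit : ∀ lam a s, F lam a s
      = βv s * sh0 s * exp (-(P a - P s)) * exp (-(lam * (a - s))) := by
    intro lam a s
    simp only [hFdef, mul_assoc, ← Real.exp_add]
    ring_nf
  have hF0 : ∀ lam a s, 0 ≤ F lam a s := by
    intro lam a s; have := hβv0 s; have := hsh0nn s; simp only [hFdef]; positivity
  have hFle : ∀ lam a s, 0 ≤ lam → 0 ≤ s → s ≤ a → F lam a s ≤ M * exp (-(μ0 * a)) := by
    intro lam a s hlam hs hsa
    rw [hFsplit]
    calc βv s * sh0 s * exp (-(P a - P s)) * exp (-(lam * (a - s)))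
        ≤ M * exp (-(μ0 * a)) * 1 := by
          refine mul_le_mul (hcore s a hs hsa) ?_ (Real.exp_pos _).le
            (by positivity)
          rw [Real.exp_le_one_iff]; nlinarith
      _ = M * exp (-(μ0 * a)) := mul_one _
  -- rewriting g
  set C : ℝ := Sv0 / μv with hCdef
  have hC0 : 0 < C := by rw [hCdef, hSv0def]; positivity
  have hgF : ∀ lam, g lam = C * ∫ a in Ioi (0:ℝ), βh a * ∫ s in (0:ℝ)..a, F lam a s := by
    intro lam
    rw [hg lam]
    congr 1
    refine setIntegral_congr_fun measurableSet_Ioi (fun a _ => ?_)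
    congr 1
    refine intervalIntegral.integral_congr (fun s _ => ?_)
    have h1 : (∫ z in s..a, (μh z + δ z + r1 z + lam)) = (P a - P s) + lam * (a - s) := by
      have : (∫ z in s..a, (μh z + δ z + r1 z + lam)) = (∫ z in s..a, κ z) + ∫ _z in s..a, lam := by
        rw [← intervalIntegral.integral_add (hIIκ s a) intervalIntegrable_const]
      rw [this, hPsub s a, intervalIntegral.integral_const, smul_eq_mul]
      ring
    rw [h1]
    simp only [hFdef]
    ring_nf
  -- continuity facts
  have hsh0c : Continuous sh0 := by
    have : sh0 = fun s => Λh * exp (-Q s) := funext hsh0Q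
    rw [this]; exact continuous_const.mul (hQc.neg).rexp
  have hexpc : ∀ lam a : ℝ, Continuous (fun s => exp (-(P a - P s) - lam * (a - s))) := by
    intro lam a
    have h : (fun s => -(P a - P s) - lam * (a - s)) =
        fun s => (P s - P a) + (lam * s - lam * a) := by funext s; ring
    exact ((h ▸ ((hPc.sub continuous_const).add
      ((continuous_const.mul continuous_id).sub continuous_const))) : Continuous _).rexp
  have hFii : ∀ lam a b c : ℝ, IntervalIntegrable (F lam a) volume b c := by
    intro lam a b c
    have hcont : Continuous fun s => Bβv * (sh0 s * exp (-(P a - P s) - lam * (a - s))) :=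
      continuous_const.mul (hsh0c.mul (hexpc lam a))
    refine (hcont.intervalIntegrable b c).mono_fun'
      (((hβvm.mul hsh0c.measurable).mul (hexpc lam a).measurable).aestronglyMeasurable.restrict)
      (ae_of_all _ fun s => ?_)
    show ‖βv s * sh0 s * exp (-(P a - P s) - lam * (a - s))‖
      ≤ Bβv * (sh0 s * exp (-(P a - P s) - lam * (a - s)))
    rw [Real.norm_eq_abs, abs_of_nonneg (by have := hβv0 s; have := hsh0nn s; positivity),
      mul_assoc]
    exact mul_le_mul_of_nonneg_right (hβvB s) (by have := hsh0nn s; positivity)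
  have hFii' : ∀ lam a b c : ℝ, IntervalIntegrable (fun s => βv s * sh0 s *
      exp (-(P a - P s) - lam * (a - s))) volume b c := by
    intro lam a b c
    have : (fun s => βv s * sh0 s * exp (-(P a - P s) - lam * (a - s))) = F lam a := by
      funext s; simp only [hFdef]
    rw [this]; exact hFii lam a b c
  -- inner integral bounds
  have hinner_nonneg : ∀ lam a : ℝ, 0 ≤ a → 0 ≤ ∫ s in (0:ℝ)..a, F lam a s := by
    intro lam a ha
    exact intervalIntegral.integral_nonneg ha (fun s _ => hF0 lam a s)
  have hinner_le : ∀ lam a : ℝ, 0 ≤ lam → 0 ≤ a →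
      (∫ s in (0:ℝ)..a, F lam a s) ≤ M * exp (-(μ0 * a)) * a := by
    intro lam a hlam ha
    calc (∫ s in (0:ℝ)..a, F lam a s) ≤ ∫ _s in (0:ℝ)..a, M * exp (-(μ0 * a)) :=
          intervalIntegral.integral_mono_on ha (hFii lam a 0 a) intervalIntegrable_const
            (fun s hs => hFle lam a s hlam hs.1 hs.2)
      _ = M * exp (-(μ0 * a)) * a := by
          rw [intervalIntegral.integral_const, smul_eq_mul]; ring
  have hinner_anti : ∀ a : ℝ, 0 ≤ a → ∀ lam lam' : ℝ, 0 ≤ lam → lam ≤ lam' →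
      (∫ s in (0:ℝ)..a, F lam' a s) ≤ ∫ s in (0:ℝ)..a, F lam a s := by
    intro a ha lam lam' hlam hll
    refine intervalIntegral.integral_mono_on ha (hFii lam' a 0 a) (hFii lam a 0 a)
      (fun s hs => ?_)
    simp only [hFdef]
    have := hβv0 s; have := hsh0nn s
    refine mul_le_mul_of_nonneg_left (Real.exp_le_exp.2 ?_) (by positivity)
    nlinarith [hs.1, hs.2]
  have hexp_lip : ∀ t lam lam' : ℝ, 0 ≤ t → 0 ≤ lam → lam ≤ lam' →
      exp (-(lam * t)) - exp (-(lam' * t)) ≤ (lam' - lam) * t := by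
    intro t lam lam' ht hlam hll
    have h1 : exp (-(lam * t)) - exp (-(lam' * t))
        = exp (-(lam * t)) * (1 - exp (-((lam' - lam) * t))) := by
      rw [mul_sub, mul_one, ← Real.exp_add]; ring_nf
    rw [h1]
    have h2 : 1 - exp (-((lam' - lam) * t)) ≤ (lam' - lam) * t := by
      have := Real.add_one_le_exp (-((lam' - lam) * t)); linarith
    have h3 : exp (-(lam * t)) ≤ 1 := by
      rw [Real.exp_le_one_iff]; nlinarith
    have h4 : 0 ≤ 1 - exp (-((lam' - lam) * t)) := by
      have : exp (-((lam' - lam) * t)) ≤ 1 := by rw [Real.exp_le_one_iff]; nlinarith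
      linarith
    nlinarith [Real.exp_pos (-(lam * t))]
  have hinner_lip : ∀ a : ℝ, 0 ≤ a → ∀ lam lam' : ℝ, 0 ≤ lam → lam ≤ lam' →
      (∫ s in (0:ℝ)..a, F lam a s) - (∫ s in (0:ℝ)..a, F lam' a s)
        ≤ (lam' - lam) * (M * exp (-(μ0 * a)) * a) * a := by
    intro a ha lam lam' hlam hll
    rw [← intervalIntegral.integral_sub (hFii lam a 0 a) (hFii lam' a 0 a)]
    calc (∫ s in (0:ℝ)..a, (F lam a s - F lam' a s))
        ≤ ∫ _s in (0:ℝ)..a, (lam' - lam) * (M * exp (-(μ0 * a)) * a) :=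
          intervalIntegral.integral_mono_on ha
            ((hFii lam a 0 a).sub (hFii lam' a 0 a)) intervalIntegrable_const
            (fun s hs => ?_)
      _ = (lam' - lam) * (M * exp (-(μ0 * a)) * a) * a := by
          rw [intervalIntegral.integral_const, smul_eq_mul]; ring
    · rw [hFsplit lam a s, hFsplit lam' a s, ← mul_sub]
      have hb1 : βv s * sh0 s * exp (-(P a - P s)) ≤ M * exp (-(μ0 * a)) :=
        hcore s a hs.1 hs.2
      have hb2 : exp (-(lam * (a - s))) - exp (-(lam' * (a - s))) ≤ (lam' - lam) * (a - s) :=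
        hexp_lip (a - s) lam lam' (by linarith [hs.2]) hlam hll
      have hb3 : 0 ≤ exp (-(lam * (a - s))) - exp (-(lam' * (a - s))) := by
        have : exp (-(lam' * (a - s))) ≤ exp (-(lam * (a - s))) :=
          Real.exp_le_exp.2 (by nlinarith [hs.1, hs.2])
        linarith
      have hb4 : (lam' - lam) * (a - s) ≤ (lam' - lam) * a := by nlinarith [hs.1, hs.2]
      nlinarith [hcore0 s a, Real.exp_pos (-(μ0 * a))]
  -- W and Ginteg
  set W : ℝ → ℝ × ℝ → ℝ := fun lam p =>
    if 0 < p.2 ∧ p.2 ≤ p.1 then F lam p.1 p.2 else 0 with hWdef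
  have hFjm : ∀ lam, Measurable (fun p : ℝ × ℝ => F lam p.1 p.2) := by
    intro lam
    have hexp2 : Continuous fun p : ℝ × ℝ => exp (-(P p.1 - P p.2) - lam * (p.1 - p.2)) := by
      refine Continuous.rexp ?_
      have : (fun p : ℝ × ℝ => -(P p.1 - P p.2) - lam * (p.1 - p.2)) =
          fun p : ℝ × ℝ => (P p.2 - P p.1) + (lam * p.2 - lam * p.1) := by funext p; ring
      rw [this]
      exact ((hPc.comp continuous_snd).sub (hPc.comp continuous_fst)).add
        (((continuous_const.mul continuous_snd)).sub (continuous_const.mul continuous_fst))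
    exact ((hβvm.comp measurable_snd).mul
      (hsh0c.measurable.comp measurable_snd)).mul hexp2.measurable
  have hWm : ∀ lam, Measurable (W lam) := by
    intro lam
    simp only [hWdef]
    exact Measurable.ite
      ((measurableSet_lt measurable_const measurable_snd).inter
        (measurableSet_le measurable_snd measurable_fst))
      (hFjm lam) measurable_const
  have hWeq : ∀ lam a : ℝ, 0 < a → (∫ s, W lam (a, s)) = ∫ s in (0:ℝ)..a, F lam a s := by
    intro lam a ha
    rw [intervalIntegral.integral_of_le ha.le]
    rw [← MeasureTheory.integral_indicator measurableSet_Ioc]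
    congr 1
    funext s
    simp only [hWdef, indicator, mem_Ioc]
  have hWeq0 : ∀ lam a : ℝ, a ≤ 0 → (∫ s, W lam (a, s)) = 0 := by
    intro lam a ha
    have : (fun s => W lam (a, s)) = fun _ => (0:ℝ) := by
      funext s
      simp only [hWdef]
      rw [if_neg]
      rintro ⟨h1, h2⟩; linarith
    rw [this, integral_zero]
  set Ginteg : ℝ → ℝ → ℝ := fun lam a => βh a * ∫ s, W lam (a, s) with hGdef
  have hGm : ∀ lam, Measurable (Ginteg lam) := by
    intro lam
    exact hβhm.mul ((hWm lam).stronglyMeasurable.integral_prod_right').measurable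
  have hgG : ∀ lam, g lam = C * ∫ a in Ioi (0:ℝ), Ginteg lam a := by
    intro lam
    rw [hgF lam]
    congr 1
    refine setIntegral_congr_fun measurableSet_Ioi (fun a ha => ?_)
    simp only [hGdef]
    rw [hWeq lam a ha]
  have hG_nonneg : ∀ lam a, 0 ≤ lam → 0 ≤ Ginteg lam a := by
    intro lam a hlam
    rcases le_or_gt a 0 with h | h
    · simp only [hGdef]; rw [hWeq0 lam a h, mul_zero]
    · simp only [hGdef]; rw [hWeq lam a h]
      exact mul_nonneg (hβh0 a) (hinner_nonneg lam a h.le)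
  have hG_le : ∀ lam a, 0 ≤ lam → 0 < a →
      Ginteg lam a ≤ Bβh * (M * exp (-(μ0 * a)) * a) := by
    intro lam a hlam ha
    simp only [hGdef]; rw [hWeq lam a ha]
    exact mul_le_mul (hβhB a) (hinner_le lam a hlam ha.le) (hinner_nonneg lam a ha.le) hBβh0
  -- dominating function
  set D : ℝ → ℝ := fun a => exp (-(μ0 / 2) * a) with hDdef
  have hDint : IntegrableOn D (Ioi 0) := exp_neg_integrableOn_Ioi 0 (by positivity)
  have hD0 : ∀ a, 0 ≤ D a := fun a => (Real.exp_pos _).le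
  have hdom1 : ∀ a : ℝ, 0 ≤ a → a * exp (-(μ0 * a)) ≤ (4 / μ0) * D a := by
    intro a ha
    have h1 : a ≤ (4 / μ0) * exp (μ0 / 4 * a) := by
      have hh := Real.add_one_le_exp (μ0 / 4 * a)
      have h4 : 0 < (4:ℝ) / μ0 := by positivity
      have h5 : (4 / μ0) * (μ0 / 4 * a) ≤ (4 / μ0) * exp (μ0 / 4 * a) :=
        mul_le_mul_of_nonneg_left (by linarith) h4.le
      have hmul : (4 / μ0) * (μ0 / 4) = 1 := by
        rw [div_mul_div_comm, mul_comm]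
        exact div_self (by positivity)
      calc a = (4 / μ0) * (μ0 / 4) * a := by rw [hmul, one_mul]
        _ = (4 / μ0) * (μ0 / 4 * a) := by rw [mul_assoc]
        _ ≤ (4 / μ0) * exp (μ0 / 4 * a) := h5
    calc a * exp (-(μ0 * a)) ≤ ((4 / μ0) * exp (μ0 / 4 * a)) * exp (-(μ0 * a)) :=
          mul_le_mul_of_nonneg_right h1 (Real.exp_pos _).le
      _ = (4 / μ0) * exp (μ0 / 4 * a - μ0 * a) := by rw [Real.exp_sub, Real.exp_neg]; ring_nf
      _ ≤ (4 / μ0) * D a := by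
          simp only [hDdef]
          refine mul_le_mul_of_nonneg_left (Real.exp_le_exp.2 (by nlinarith)) (by positivity)
  have hdom2 : ∀ a : ℝ, 0 ≤ a → a ^ 2 * exp (-(μ0 * a)) ≤ (4 / μ0) ^ 2 * D a := by
    intro a ha
    have h1 : a ≤ (4 / μ0) * exp (μ0 / 4 * a) := by
      have hh := Real.add_one_le_exp (μ0 / 4 * a)
      have h4 : 0 < (4:ℝ) / μ0 := by positivity
      have h5 : (4 / μ0) * (μ0 / 4 * a) ≤ (4 / μ0) * exp (μ0 / 4 * a) :=
        mul_le_mul_of_nonneg_left (by linarith) h4.le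
      have hmul : (4 / μ0) * (μ0 / 4) = 1 := by
        rw [div_mul_div_comm, mul_comm]
        exact div_self (by positivity)
      calc a = (4 / μ0) * (μ0 / 4) * a := by rw [hmul, one_mul]
        _ = (4 / μ0) * (μ0 / 4 * a) := by rw [mul_assoc]
        _ ≤ (4 / μ0) * exp (μ0 / 4 * a) := h5
    have h2 : a ^ 2 ≤ (4 / μ0) ^ 2 * exp (μ0 / 4 * a) ^ 2 := by
      rw [← mul_pow]; exact pow_le_pow_left₀ ha h1 2
    have h3 : exp (μ0 / 4 * a) ^ 2 = exp (μ0 / 2 * a) := by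
      rw [← Real.exp_nat_mul]; ring_nf
    calc a ^ 2 * exp (-(μ0 * a)) ≤ ((4 / μ0) ^ 2 * exp (μ0 / 2 * a)) * exp (-(μ0 * a)) := by
          rw [← h3]; exact mul_le_mul_of_nonneg_right h2 (Real.exp_pos _).le
      _ = (4 / μ0) ^ 2 * exp (μ0 / 2 * a - μ0 * a) := by
          rw [Real.exp_sub, Real.exp_neg]; ring
      _ ≤ (4 / μ0) ^ 2 * D a := by
          simp only [hDdef]
          refine mul_le_mul_of_nonneg_left (Real.exp_le_exp.2 (by nlinarith)) (by positivity)
  -- outer integrability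
  have hGint : ∀ lam, 0 ≤ lam → IntegrableOn (Ginteg lam) (Ioi 0) := by
    intro lam hlam
    refine Integrable.mono' (hDint.const_mul (Bβh * M * (4 / μ0)))
      (hGm lam).aestronglyMeasurable.restrict ?_
    refine (ae_restrict_iff' measurableSet_Ioi).2 (ae_of_all _ fun a ha => ?_)
    rw [Real.norm_eq_abs, abs_of_nonneg (hG_nonneg lam a hlam)]
    calc Ginteg lam a ≤ Bβh * (M * exp (-(μ0 * a)) * a) := hG_le lam a hlam ha
      _ = (Bβh * M) * (a * exp (-(μ0 * a))) := by ring
      _ ≤ (Bβh * M) * ((4 / μ0) * D a) :=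
          mul_le_mul_of_nonneg_left (hdom1 a (le_of_lt ha)) (by positivity)
      _ = Bβh * M * (4 / μ0) * D a := by ring
  -- antitone
  have hanti : AntitoneOn g (Ici (0:ℝ)) := by
    intro lam hlam lam' hlam' hle
    rw [hgG lam, hgG lam']
    refine mul_le_mul_of_nonneg_left ?_ hC0.le
    refine setIntegral_mono_on (hGint lam' (hlam.trans hle)) (hGint lam hlam)
      measurableSet_Ioi (fun a ha => ?_)
    simp only [hGdef]
    rw [hWeq lam' a ha, hWeq lam a ha]
    exact mul_le_mul_of_nonneg_left (hinner_anti a ha.le lam lam' hlam hle) (hβh0 a)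
  -- Lipschitz bound
  set KD : ℝ := ∫ a in Ioi (0:ℝ), D a with hKDdef
  have hKD0 : 0 ≤ KD := setIntegral_nonneg measurableSet_Ioi (fun a _ => hD0 a)
  set L : ℝ := C * (Bβh * M * (4 / μ0) ^ 2 * KD) with hLdef
  have hL0 : 0 ≤ L := by
    have : 0 ≤ Bβh * M * (4 / μ0) ^ 2 * KD := by positivity
    exact mul_nonneg hC0.le this
  have hLip : ∀ lam lam' : ℝ, 0 ≤ lam → lam ≤ lam' → g lam - g lam' ≤ L * (lam' - lam) := by
    intro lam lam' hlam hle
    have hlam' : 0 ≤ lam' := hlam.trans hle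
    rw [hgG lam, hgG lam', ← mul_sub,
      ← integral_sub (hGint lam hlam) (hGint lam' hlam')]
    have hstep : (∫ a in Ioi (0:ℝ), (Ginteg lam a - Ginteg lam' a))
        ≤ ∫ a in Ioi (0:ℝ), (lam' - lam) * (Bβh * M * (4 / μ0) ^ 2) * D a := by
      refine setIntegral_mono_on ((hGint lam hlam).sub (hGint lam' hlam'))
        (((hDint.const_mul _)).mono_measure le_rfl) measurableSet_Ioi (fun a ha => ?_)
      have ha0 : (0:ℝ) < a := ha
      simp only [hGdef]
      rw [hWeq lam a ha0, hWeq lam' a ha0, ← mul_sub]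
      calc βh a * ((∫ s in (0:ℝ)..a, F lam a s) - ∫ s in (0:ℝ)..a, F lam' a s)
          ≤ Bβh * ((lam' - lam) * (M * exp (-(μ0 * a)) * a) * a) := by
            refine mul_le_mul (hβhB a) (hinner_lip a ha0.le lam lam' hlam hle) ?_ hBβh0
            have := hinner_anti a ha0.le lam lam' hlam hle; linarith
        _ = (lam' - lam) * (Bβh * M) * (a ^ 2 * exp (-(μ0 * a))) := by ring
        _ ≤ (lam' - lam) * (Bβh * M) * ((4 / μ0) ^ 2 * D a) := by
            refine mul_le_mul_of_nonneg_left (hdom2 a ha0.le) ?_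
            have : 0 ≤ lam' - lam := by linarith
            positivity
        _ = (lam' - lam) * (Bβh * M * (4 / μ0) ^ 2) * D a := by ring
    calc C * ∫ a in Ioi (0:ℝ), (Ginteg lam a - Ginteg lam' a)
        ≤ C * ∫ a in Ioi (0:ℝ), (lam' - lam) * (Bβh * M * (4 / μ0) ^ 2) * D a :=
          mul_le_mul_of_nonneg_left hstep hC0.le
      _ = L * (lam' - lam) := by
          rw [MeasureTheory.integral_const_mul, hLdef, hKDdef]; ring
  have hcont : ContinuousOn g (Ici (0:ℝ)) := by
    refine LipschitzOnWith.continuousOn (K := Real.toNNReal L)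
      (LipschitzOnWith.of_dist_le_mul fun x hx y hy => ?_)
    have hx0 : (0:ℝ) ≤ x := hx
    have hy0 : (0:ℝ) ≤ y := hy
    have hLcoe : (Real.toNNReal L : ℝ) = L := Real.coe_toNNReal L hL0
    rw [Real.dist_eq, Real.dist_eq, hLcoe]
    rcases le_total x y with h | h
    · have h1 := hLip x y hx0 h
      have h2 : g y ≤ g x := hanti hx hy h
      rw [abs_of_nonneg (by linarith : (0:ℝ) ≤ g x - g y),
        abs_of_nonpos (by linarith : x - y ≤ 0)]
      linarith
    · have h1 := hLip y x hy0 h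
      have h2 : g x ≤ g y := hanti hy hx h
      rw [abs_of_nonpos (by linarith : g x - g y ≤ 0),
        abs_of_nonneg (by linarith : (0:ℝ) ≤ x - y)]
      linarith
  -- tendsto 0 at infinity
  have hg_nonneg : ∀ lam : ℝ, 0 ≤ lam → 0 ≤ g lam := by
    intro lam hlam
    rw [hgG lam]
    exact mul_nonneg hC0.le
      (setIntegral_nonneg measurableSet_Ioi (fun a _ => hG_nonneg lam a hlam))
  have hexpint : ∀ a lam : ℝ, 0 ≤ a → 0 < lam →
      (∫ s in (0:ℝ)..a, exp (-(lam * (a - s)))) ≤ 1 / lam := by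
    intro a lam ha hlam
    have h1 : (fun s => exp (-(lam * (a - s)))) = fun s => exp (lam * s) * exp (-(lam * a)) := by
      funext s; rw [← Real.exp_add]; ring_nf
    have h2 : (∫ s in (0:ℝ)..a, exp (lam * s)) = lam⁻¹ * (exp (lam * a) - 1) := by
      rw [intervalIntegral.integral_comp_mul_left (fun x => exp x) hlam.ne']
      rw [integral_exp, mul_zero, Real.exp_zero, smul_eq_mul]
    rw [h1, intervalIntegral.integral_mul_const, h2]
    have h3 : (exp (lam * a) - 1) * exp (-(lam * a)) = 1 - exp (-(lam * a)) := by
      rw [sub_mul, one_mul, ← Real.exp_add, add_neg_cancel, Real.exp_zero]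
    rw [mul_assoc, h3, one_div]
    exact mul_le_of_le_one_right (inv_nonneg.2 hlam.le)
      (by linarith [Real.exp_pos (-(lam * a))])
  have hexpc2 : ∀ lam a : ℝ, Continuous (fun s => exp (-(lam * (a - s)))) := by
    intro lam a
    refine Continuous.rexp ?_
    have : (fun s : ℝ => -(lam * (a - s))) = fun s => lam * s - lam * a := by funext s; ring
    rw [this]
    exact (continuous_const.mul continuous_id).sub continuous_const
  set Kexp : ℝ := ∫ a in Ioi (0:ℝ), exp (-(μ0 * a)) with hKexpdef
  have hKexp0 : 0 ≤ Kexp := setIntegral_nonneg measurableSet_Ioi (fun a _ => (Real.exp_pos _).le)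
  have hEint : IntegrableOn (fun a => exp (-(μ0 * a))) (Ioi 0) := by
    have := exp_neg_integrableOn_Ioi (0:ℝ) hμ0
    simpa [neg_mul] using this
  have hgle : ∀ lam : ℝ, 1 ≤ lam → g lam ≤ C * (Bβh * M * Kexp) / lam := by
    intro lam hlam
    have hlam0 : (0:ℝ) < lam := lt_of_lt_of_le one_pos hlam
    have hinner2 : ∀ a : ℝ, 0 < a →
        (∫ s in (0:ℝ)..a, F lam a s) ≤ M * exp (-(μ0 * a)) / lam := by
      intro a ha
      have hcmp : (∫ s in (0:ℝ)..a, F lam a s)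
          ≤ ∫ s in (0:ℝ)..a, M * exp (-(μ0 * a)) * exp (-(lam * (a - s))) := by
        refine intervalIntegral.integral_mono_on ha.le (hFii lam a 0 a)
          (((continuous_const.mul (hexpc2 lam a))).intervalIntegrable 0 a) (fun s hs => ?_)
        rw [hFsplit]
        exact mul_le_mul_of_nonneg_right (hcore s a hs.1 hs.2) (Real.exp_pos _).le
      have heq : (∫ s in (0:ℝ)..a, M * exp (-(μ0 * a)) * exp (-(lam * (a - s))))
          = M * exp (-(μ0 * a)) * ∫ s in (0:ℝ)..a, exp (-(lam * (a - s))) :=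
        intervalIntegral.integral_const_mul _ _
      calc (∫ s in (0:ℝ)..a, F lam a s) ≤ _ := hcmp
        _ = M * exp (-(μ0 * a)) * ∫ s in (0:ℝ)..a, exp (-(lam * (a - s))) := heq
        _ ≤ M * exp (-(μ0 * a)) * (1 / lam) := by
            refine mul_le_mul_of_nonneg_left (hexpint a lam ha.le hlam0) (by positivity)
        _ = M * exp (-(μ0 * a)) / lam := by ring
    rw [hgG lam]
    have hout : (∫ a in Ioi (0:ℝ), Ginteg lam a)
        ≤ ∫ a in Ioi (0:ℝ), (Bβh * M / lam) * exp (-(μ0 * a)) := by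
      refine setIntegral_mono_on (hGint lam (by linarith)) (hEint.const_mul _)
        measurableSet_Ioi (fun a ha => ?_)
      have ha0 : (0:ℝ) < a := ha
      simp only [hGdef]
      rw [hWeq lam a ha0]
      calc βh a * ∫ s in (0:ℝ)..a, F lam a s
          ≤ Bβh * (M * exp (-(μ0 * a)) / lam) :=
            mul_le_mul (hβhB a) (hinner2 a ha0) (hinner_nonneg lam a ha0.le) hBβh0
        _ = (Bβh * M / lam) * exp (-(μ0 * a)) := by ring
    calc C * ∫ a in Ioi (0:ℝ), Ginteg lam a
        ≤ C * ((Bβh * M / lam) * Kexp) := by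
          refine mul_le_mul_of_nonneg_left ?_ hC0.le
          rw [hKexpdef, ← MeasureTheory.integral_const_mul]
          exact hout
      _ = C * (Bβh * M * Kexp) / lam := by ring
  have htend : Filter.Tendsto g Filter.atTop (nhds 0) := by
    have hlim : Filter.Tendsto (fun lam : ℝ => C * (Bβh * M * Kexp) / lam)
        Filter.atTop (nhds 0) :=
      Filter.Tendsto.div_atTop tendsto_const_nhds Filter.tendsto_id
    refine squeeze_zero' ?_ ?_ hlim
    · filter_upwards [Filter.eventually_ge_atTop (0:ℝ)] with lam hlam
      exact hg_nonneg lam hlam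
    · filter_upwards [Filter.eventually_ge_atTop (1:ℝ)] with lam hlam
      exact hgle lam hlam
  -- value at zero
  set H2 : ℝ × ℝ → ℝ := fun p => βh p.2 * (βv p.1 * sh0 p.1 * exp (-(P p.2 - P p.1)))
    with hH2def
  have hH2m : Measurable H2 := by
    have hexp3 : Continuous fun p : ℝ × ℝ => exp (-(P p.2 - P p.1)) := by
      refine Continuous.rexp ?_
      have : (fun p : ℝ × ℝ => -(P p.2 - P p.1)) = fun p => P p.1 - P p.2 := by
        funext p; ring
      rw [this]
      exact (hPc.comp continuous_fst).sub (hPc.comp continuous_snd)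
    exact (hβhm.comp measurable_snd).mul
      (((hβvm.comp measurable_fst).mul (hsh0c.measurable.comp measurable_fst)).mul
        hexp3.measurable)
  have hH2nn : ∀ p : ℝ × ℝ, 0 ≤ H2 p := by
    intro p
    have := hβh0 p.2; have := hβv0 p.1; have := hsh0nn p.1
    simp only [hH2def]; positivity
  have hH2b : ∀ ξ a : ℝ, 0 ≤ ξ → ξ ≤ a → H2 (ξ, a) ≤ Bβh * (M * exp (-(μ0 * a))) := by
    intro ξ a hξ hξa
    simp only [hH2def]
    exact mul_le_mul (hβhB a) (hcore ξ a hξ hξa) (hcore0 ξ a) hBβh0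
  have hstepA : ∀ s ξ : ℝ,
      βh (ξ+s) * βv ξ * sh0 ξ * exp (-(∫ u in ξ..(ξ+s), (μh u + r1 u + δ u)))
        = H2 (ξ, ξ+s) := by
    intro s ξ
    have h1 : (∫ u in ξ..(ξ+s), (μh u + r1 u + δ u)) = P (ξ+s) - P ξ := by
      rw [← hPsub ξ (ξ+s)]
      exact intervalIntegral.integral_congr (fun u _ => by ring)
    rw [h1]; simp only [hH2def]; ring
  -- first Fubini swap
  have hΦint : Integrable (fun q : ℝ × ℝ => H2 (q.2, q.2 + q.1))
      ((volume.restrict (Ioi 0)).prod (volume.restrict (Ioi 0))) := by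
    have hm : Measurable fun q : ℝ × ℝ => H2 (q.2, q.2 + q.1) :=
      hH2m.comp (measurable_snd.prodMk (measurable_snd.add measurable_fst))
    have hdomint : Integrable (fun q : ℝ × ℝ =>
        (Bβh * M) * (exp (-(μ0 * q.1)) * exp (-(μ0 * q.2))))
        ((volume.restrict (Ioi 0)).prod (volume.restrict (Ioi 0))) :=
      (hEint.mul_prod hEint).const_mul _
    refine hdomint.mono' hm.aestronglyMeasurable ?_
    rw [Measure.prod_restrict]
    refine (ae_restrict_iff' (measurableSet_Ioi.prod measurableSet_Ioi)).2
      (ae_of_all _ fun q hq => ?_)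
    obtain ⟨hq1, hq2⟩ := hq
    have hq1' : (0:ℝ) < q.1 := hq1
    have hq2' : (0:ℝ) < q.2 := hq2
    rw [Real.norm_eq_abs, abs_of_nonneg (hH2nn _)]
    calc H2 (q.2, q.2 + q.1) ≤ Bβh * (M * exp (-(μ0 * (q.2 + q.1)))) :=
          hH2b q.2 (q.2 + q.1) hq2'.le (by linarith)
      _ = (Bβh * M) * (exp (-(μ0 * q.1)) * exp (-(μ0 * q.2))) := by
          rw [← Real.exp_add]; ring_nf
  have hswap1 : (∫ s in Ioi (0:ℝ), ∫ ξ in Ioi (0:ℝ), H2 (ξ, ξ + s))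
      = ∫ ξ in Ioi (0:ℝ), ∫ s in Ioi (0:ℝ), H2 (ξ, ξ + s) :=
    integral_integral_swap hΦint
  -- translation
  have htrans : ∀ ξ : ℝ, (∫ s in Ioi (0:ℝ), H2 (ξ, ξ + s)) = ∫ a in Ioi ξ, H2 (ξ, a) := by
    intro ξ
    rw [← MeasureTheory.integral_indicator measurableSet_Ioi,
      ← MeasureTheory.integral_indicator measurableSet_Ioi]
    have h1 : ∀ s : ℝ, (Ioi (0:ℝ)).indicator (fun s => H2 (ξ, ξ + s)) s
        = (Ioi ξ).indicator (fun a => H2 (ξ, a)) (ξ + s) := by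
      intro s
      by_cases h : s ∈ Ioi (0:ℝ)
      · rw [indicator_of_mem h, indicator_of_mem (by simp only [mem_Ioi] at h ⊢; linarith)]
      · rw [indicator_of_notMem h, indicator_of_notMem (by
          simp only [mem_Ioi] at h ⊢; intro hc; exact h (by linarith))]
    rw [integral_congr_ae (ae_of_all _ h1)]
    exact integral_add_left_eq_self (fun a => (Ioi ξ).indicator (fun a => H2 (ξ, a)) a) ξ
  -- Ψ and second swap
  set Ψ : ℝ × ℝ → ℝ := fun p => if p.1 < p.2 then H2 p else 0 with hΨdef
  have hΨm : Measurable Ψ := by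
    simp only [hΨdef]
    exact Measurable.ite (measurableSet_lt measurable_fst measurable_snd) hH2m
      measurable_const
  have hΨnn : ∀ p, 0 ≤ Ψ p := by
    intro p; simp only [hΨdef]
    split
    · exact hH2nn p
    · exact le_refl 0
  have hD4 : ∀ ξ : ℝ, 0 < ξ → (∫ a in Ioi ξ, H2 (ξ, a)) = ∫ a in Ioi (0:ℝ), Ψ (ξ, a) := by
    intro ξ hξ
    have h1 : ∀ a, Ψ (ξ, a) = (Ioi ξ).indicator (fun a => H2 (ξ, a)) a := by
      intro a
      simp only [hΨdef, indicator, mem_Ioi]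
    rw [integral_congr_ae (ae_of_all _ fun a => h1 a), setIntegral_indicator measurableSet_Ioi,
      Ioi_inter_Ioi, max_eq_right hξ.le]
  have hΨint : Integrable Ψ ((volume.restrict (Ioi 0)).prod (volume.restrict (Ioi 0))) := by
    have hEint2 : IntegrableOn (fun a : ℝ => exp (-(μ0 / 2 * a))) (Ioi 0) := by
      have := exp_neg_integrableOn_Ioi (0:ℝ) (show (0:ℝ) < μ0 / 2 by positivity)
      simpa [neg_mul] using this
    have hdomint : Integrable (fun q : ℝ × ℝ =>
        (Bβh * M) * (exp (-(μ0 / 2 * q.1)) * exp (-(μ0 / 2 * q.2))))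
        ((volume.restrict (Ioi 0)).prod (volume.restrict (Ioi 0))) :=
      (hEint2.mul_prod hEint2).const_mul _
    refine hdomint.mono' hΨm.aestronglyMeasurable ?_
    rw [Measure.prod_restrict]
    refine (ae_restrict_iff' (measurableSet_Ioi.prod measurableSet_Ioi)).2
      (ae_of_all _ fun q hq => ?_)
    obtain ⟨hq1, hq2⟩ := hq
    have hq1' : (0:ℝ) < q.1 := hq1
    have hq2' : (0:ℝ) < q.2 := hq2
    rw [Real.norm_eq_abs, abs_of_nonneg (hΨnn _)]
    simp only [hΨdef]
    split
    · rename_i hlt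
      calc H2 q ≤ Bβh * (M * exp (-(μ0 * q.2))) := by
            have := hH2b q.1 q.2 hq1'.le hlt.le
            simpa using this
        _ = (Bβh * M) * (exp (-(μ0 / 2 * q.2)) * exp (-(μ0 / 2 * q.2))) := by
            rw [← Real.exp_add]; ring_nf
        _ ≤ (Bβh * M) * (exp (-(μ0 / 2 * q.1)) * exp (-(μ0 / 2 * q.2))) := by
            have hBM : 0 ≤ Bβh * M := by positivity
            have : exp (-(μ0 / 2 * q.2)) ≤ exp (-(μ0 / 2 * q.1)) :=
              Real.exp_le_exp.2 (by nlinarith)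
            exact mul_le_mul_of_nonneg_left
              (mul_le_mul_of_nonneg_right this (Real.exp_pos _).le) hBM
    · positivity
  have hswap2 : (∫ ξ in Ioi (0:ℝ), ∫ a in Ioi (0:ℝ), Ψ (ξ, a))
      = ∫ a in Ioi (0:ℝ), ∫ ξ in Ioi (0:ℝ), Ψ (ξ, a) :=
    integral_integral_swap (f := fun ξ a => Ψ (ξ, a)) (by exact hΨint)
  -- inner evaluation
  have hstepF : ∀ a : ℝ, 0 < a →
      (∫ ξ in Ioi (0:ℝ), Ψ (ξ, a)) = βh a * ∫ s in (0:ℝ)..a, F 0 a s := by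
    intro a ha
    have h1 : ∀ ξ, Ψ (ξ, a) = (Iio a).indicator (fun ξ => H2 (ξ, a)) ξ := by
      intro ξ
      simp only [hΨdef, indicator, mem_Iio]
    rw [integral_congr_ae (ae_of_all _ fun ξ => h1 ξ), setIntegral_indicator measurableSet_Iio,
      Ioi_inter_Iio, ← integral_Ioc_eq_integral_Ioo, ← intervalIntegral.integral_of_le ha.le,
      ← intervalIntegral.integral_const_mul]
    refine intervalIntegral.integral_congr (fun ξ _ => ?_)
    show H2 (ξ, a) = βh a * F 0 a ξ
    simp only [hH2def, hFdef]
    norm_num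
  -- assemble g 0
  have hXeq : (∫ s in Ioi (0:ℝ), ∫ ξ in Ioi (0:ℝ),
      βh (ξ+s) * βv ξ * sh0 ξ * exp (-(∫ u in ξ..(ξ+s), (μh u + r1 u + δ u))))
      = ∫ a in Ioi (0:ℝ), βh a * ∫ s in (0:ℝ)..a, F 0 a s := by
    calc (∫ s in Ioi (0:ℝ), ∫ ξ in Ioi (0:ℝ),
        βh (ξ+s) * βv ξ * sh0 ξ * exp (-(∫ u in ξ..(ξ+s), (μh u + r1 u + δ u))))
        = ∫ s in Ioi (0:ℝ), ∫ ξ in Ioi (0:ℝ), H2 (ξ, ξ + s) := by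
          refine setIntegral_congr_fun measurableSet_Ioi (fun s _ => ?_)
          exact setIntegral_congr_fun measurableSet_Ioi (fun ξ _ => hstepA s ξ)
      _ = ∫ ξ in Ioi (0:ℝ), ∫ s in Ioi (0:ℝ), H2 (ξ, ξ + s) := hswap1
      _ = ∫ ξ in Ioi (0:ℝ), ∫ a in Ioi (0:ℝ), Ψ (ξ, a) := by
          refine setIntegral_congr_fun measurableSet_Ioi (fun ξ hξ => ?_)
          rw [htrans ξ, hD4 ξ hξ]
      _ = ∫ a in Ioi (0:ℝ), ∫ ξ in Ioi (0:ℝ), Ψ (ξ, a) := hswap2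
      _ = ∫ a in Ioi (0:ℝ), βh a * ∫ s in (0:ℝ)..a, F 0 a s := by
          refine setIntegral_congr_fun measurableSet_Ioi (fun a ha => ?_)
          exact hstepF a ha
  have hX0 : (0:ℝ) ≤ C * ∫ s in Ioi (0:ℝ), ∫ ξ in Ioi (0:ℝ),
      βh (ξ+s) * βv ξ * sh0 ξ * exp (-(∫ u in ξ..(ξ+s), (μh u + r1 u + δ u))) := by
    refine mul_nonneg hC0.le (setIntegral_nonneg measurableSet_Ioi (fun s _ => ?_))
    refine setIntegral_nonneg measurableSet_Ioi (fun ξ _ => ?_)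
    have := hβh0 (ξ+s); have := hβv0 ξ; have := hsh0nn ξ
    positivity
  have hg0R : g 0 = R0 ^ 2 := by
    rw [hR0, Real.sq_sqrt hX0, hgF 0]
    rw [hXeq]
  -- existence of root
  have hivt : 1 < R0 → ∃ lam : ℝ, 0 < lam ∧ g lam = 1 := by
    intro hR1
    have hg0gt : 1 < g 0 := by
      rw [hg0R]; nlinarith
    have hev : ∀ᶠ lam in Filter.atTop, g lam < 1 :=
      htend.eventually_lt_const one_pos
    obtain ⟨T, hT⟩ := (hev.and (Filter.eventually_ge_atTop (1:ℝ))).exists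
    obtain ⟨hT1, hT2⟩ := hT
    have hT0 : (0:ℝ) ≤ T := by linarith
    have hsub : Icc (0:ℝ) T ⊆ Ici (0:ℝ) := fun x hx => hx.1
    have hIVT := intermediate_value_Icc' hT0 (hcont.mono hsub)
    have h1mem : (1:ℝ) ∈ Icc (g T) (g 0) := ⟨hT1.le, hg0gt.le⟩
    obtain ⟨lam, hlam, hglam⟩ := hIVT h1mem
    refine ⟨lam, ?_, hglam⟩
    rcases eq_or_lt_of_le hlam.1 with h | h
    · exfalso; rw [← h] at hglam; rw [hglam] at hg0gt; exact lt_irrefl 1 hg0gt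
    · exact h
  exact ⟨hcont, hanti, hg0R, htend, hivt⟩
end

section
/- Define, for complex λ with Re(λ) ≥ 0, g(λ) = (S_v^0/μ_v)·∫_0^∞ β_h(a)·∫_0^a β_v(s)·s_h^0(s)·exp(-∫_s^a (μ_h(z)+δ(z)+r_1(z)+λ)dz) ds da. Then |g(λ)| ≤ R_0² for every complex λ with Re(λ) ≥ 0. In particular, if R_0 < 1, then g(λ) ≠ 1 for every complex λ with Re(λ) ≥ 0. -/
open MeasureTheory Real Set

lemma aux_ii_of_bounded {f : ℝ → ℝ} (hm : Measurable f) {C : ℝ} (hC : ∀ x, |f x| ≤ C)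
    (a b : ℝ) : IntervalIntegrable f volume a b := by
  rw [intervalIntegrable_iff]
  exact (integrableOn_const (C := C) measure_Ioc_lt_top.ne).mono'
    hm.aestronglyMeasurable (ae_of_all _ hC)

/-- The characteristic function of the linearization of the age-structured SIRS/SI
malaria model at the parasite-free equilibrium satisfies `|g(λ)| ≤ R₀²` on the closed
right half plane; in particular it has no root of `g(λ) = 1` there when `R₀ < 1`. -/
theorem characteristic_function_complex_bound
    (Λh Λv μv μ0 : ℝ)
    (μh δ r1 r2 βh βv : ℝ → ℝ)
    (hΛh : 0 < Λh) (hΛv : 0 < Λv) (hμv : 0 < μv) (hμ0 : 0 < μ0)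
    (hμhm : Measurable μh) (hδm : Measurable δ) (hr1m : Measurable r1)
    (hr2m : Measurable r2) (hβhm : Measurable βh) (hβvm : Measurable βv)
    (hμh_lb : ∀ a, μ0 ≤ μh a) (hμv_lb : μ0 ≤ μv)
    (hδ0 : ∀ a, 0 ≤ δ a) (hr10 : ∀ a, 0 ≤ r1 a) (hr20 : ∀ a, 0 ≤ r2 a)
    (hβh0 : ∀ a, 0 ≤ βh a) (hβv0 : ∀ a, 0 ≤ βv a)
    (Bμh Bδ Br1 Br2 Bβh Bβv : ℝ)
    (hμhB : ∀ a, μh a ≤ Bμh) (hδB : ∀ a, δ a ≤ Bδ) (hr1B : ∀ a, r1 a ≤ Br1)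
    (hr2B : ∀ a, r2 a ≤ Br2) (hβhB : ∀ a, βh a ≤ Bβh) (hβvB : ∀ a, βv a ≤ Bβv)
    (sh0 : ℝ → ℝ) (hsh0 : ∀ a, sh0 a = Λh * exp (-(∫ u in (0:ℝ)..a, μh u)))
    (Sv0 : ℝ) (hSv0def : Sv0 = Λv / μv)
    (R0 : ℝ)
    (hR0 : R0 = Real.sqrt ((Sv0 / μv) * ∫ s in Ioi (0:ℝ), ∫ ξ in Ioi (0:ℝ),
      βh (ξ+s) * βv ξ * sh0 ξ * exp (-(∫ u in ξ..(ξ+s), (μh u + r1 u + δ u)))))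
    (g : ℂ → ℂ)
    (hg : ∀ lam : ℂ, g lam = ((Sv0 / μv : ℝ) : ℂ) * ∫ a in Ioi (0:ℝ), ((βh a : ℝ) : ℂ) *
      ∫ s in (0:ℝ)..a, ((βv s * sh0 s : ℝ) : ℂ) *
        Complex.exp (-(∫ z in s..a, (((μh z + δ z + r1 z : ℝ) : ℂ) + lam)))) :
    (∀ lam : ℂ, 0 ≤ lam.re → ‖g lam‖ ≤ R0 ^ 2) ∧
    (R0 < 1 → ∀ lam : ℂ, 0 ≤ lam.re → g lam ≠ 1) := by
  -- basic constants
  have hBβh0 : 0 ≤ Bβh := le_trans (hβh0 0) (hβhB 0)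
  have hBβv0 : 0 ≤ Bβv := le_trans (hβv0 0) (hβvB 0)
  set c : ℝ → ℝ := fun z => μh z + δ z + r1 z with hcdef
  have hcz : ∀ z, μh z + δ z + r1 z = c z := fun z => rfl
  have hcz' : ∀ z, μh z + r1 z + δ z = c z := fun z => by rw [hcdef]; ring
  have hcm : Measurable c := (hμhm.add hδm).add hr1m
  have hc_lb : ∀ z, μ0 ≤ c z := fun z => by
    have h1 := hμh_lb z; have h2 := hδ0 z; have h3 := hr10 z
    simp only [hcdef]; linarith
  have hc0 : ∀ z, 0 ≤ c z := fun z => le_trans hμ0.le (hc_lb z)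
  have hcC : ∀ z, |c z| ≤ Bμh + Bδ + Br1 := fun z => by
    rw [abs_of_nonneg (hc0 z)]
    have h1 := hμhB z; have h2 := hδB z; have h3 := hr1B z
    simp only [hcdef]; linarith
  have hcint : ∀ s a : ℝ, IntervalIntegrable c volume s a :=
    fun s a => aux_ii_of_bounded hcm hcC s a
  have hμhC : ∀ z, |μh z| ≤ Bμh := fun z =>
    abs_le.2 ⟨by have h1 := hμh_lb z; have h2 := hμhB z; linarith [hμ0.le], hμhB z⟩
  have hμhint : ∀ s a : ℝ, IntervalIntegrable μh volume s a :=
    fun s a => aux_ii_of_bounded hμhm hμhC s a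
  -- the kernel E
  set E : ℝ → ℝ → ℝ := fun s a => exp (-(∫ z in s..a, c z)) with hEdef
  have hFc : Continuous (fun x => ∫ u in (0:ℝ)..x, c u) :=
    intervalIntegral.continuous_primitive (fun a b => hcint a b) 0
  have hF0 : Continuous (fun x => ∫ u in (0:ℝ)..x, μh u) :=
    intervalIntegral.continuous_primitive (fun a b => hμhint a b) 0
  have hsub : ∀ s a : ℝ, (∫ z in s..a, c z)
      = (∫ u in (0:ℝ)..a, c u) - (∫ u in (0:ℝ)..s, c u) :=
    fun s a => (intervalIntegral.integral_interval_sub_left (hcint 0 a) (hcint 0 s)).symm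
  have hEc : Continuous (fun p : ℝ × ℝ => E p.1 p.2) := by
    have heq : (fun p : ℝ × ℝ => E p.1 p.2)
        = fun p : ℝ × ℝ => exp (-((∫ u in (0:ℝ)..p.2, c u) - (∫ u in (0:ℝ)..p.1, c u))) :=
      funext fun p => by rw [hEdef]; simp only []; rw [hsub]
    rw [heq]
    exact (((hFc.comp continuous_snd).sub (hFc.comp continuous_fst)).neg).rexp
  have hE0 : ∀ s a : ℝ, 0 ≤ E s a := fun s a => (exp_pos _).le
  have hE_le_one : ∀ s a : ℝ, s ≤ a → E s a ≤ 1 := by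
    intro s a hsa
    have h1 : (0:ℝ) ≤ ∫ z in s..a, c z :=
      intervalIntegral.integral_nonneg hsa (fun u _ => hc0 u)
    calc E s a = exp (-(∫ z in s..a, c z)) := rfl
      _ ≤ exp 0 := exp_le_exp.2 (by linarith)
      _ = 1 := exp_zero
  have hE_decay : ∀ ξ s : ℝ, 0 ≤ s → E ξ (ξ + s) ≤ exp (-(μ0 * s)) := by
    intro ξ s hs
    have h1 : μ0 * s ≤ ∫ z in ξ..(ξ + s), c z := by
      have h2 := intervalIntegral.integral_mono_on (by linarith : ξ ≤ ξ + s)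
        (intervalIntegrable_const (c := μ0)) (hcint ξ (ξ + s)) (fun x _ => hc_lb x)
      rw [intervalIntegral.integral_const] at h2
      simpa [smul_eq_mul, mul_comm] using h2
    exact exp_le_exp.2 (by linarith)
  -- sh0 facts
  have hsh0_nonneg : ∀ a : ℝ, 0 ≤ sh0 a := fun a => by rw [hsh0]; positivity
  have hsh0_cont : Continuous sh0 := by
    have h1 : Continuous fun a : ℝ => Λh * exp (-(∫ u in (0:ℝ)..a, μh u)) :=
      continuous_const.mul (hF0.neg.rexp)
    exact h1.congr fun a => (hsh0 a).symm
  have hsh0_decay : ∀ ξ : ℝ, 0 ≤ ξ → sh0 ξ ≤ Λh * exp (-(μ0 * ξ)) := by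
    intro ξ hξ; rw [hsh0]
    have h1 : μ0 * ξ ≤ ∫ u in (0:ℝ)..ξ, μh u := by
      have h2 := intervalIntegral.integral_mono_on hξ
        (intervalIntegrable_const (c := μ0)) (hμhint 0 ξ) (fun x _ => hμh_lb x)
      rw [intervalIntegral.integral_const] at h2
      simpa [smul_eq_mul, mul_comm] using h2
    have h3 : exp (-(∫ u in (0:ℝ)..ξ, μh u)) ≤ exp (-(μ0 * ξ)) :=
      exp_le_exp.2 (by linarith)
    exact mul_le_mul_of_nonneg_left h3 hΛh.le
  -- the real kernels
  set ψ : ℝ → ℝ → ℝ := fun s a => βv s * sh0 s * E s a with hψdef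
  set Ψ : ℝ → ℝ → ℝ := fun s a => βh a * ψ s a with hΨdef
  have hψ0 : ∀ s a : ℝ, 0 ≤ ψ s a := fun s a =>
    mul_nonneg (mul_nonneg (hβv0 s) (hsh0_nonneg s)) (hE0 s a)
  have hΨ0 : ∀ s a : ℝ, 0 ≤ Ψ s a := fun s a => mul_nonneg (hβh0 a) (hψ0 s a)
  have hΨmeas : Measurable fun p : ℝ × ℝ => Ψ p.1 p.2 := by
    apply Measurable.mul (hβhm.comp measurable_snd)
    exact (((hβvm.comp measurable_fst).mul
      (hsh0_cont.measurable.comp measurable_fst)).mul hEc.measurable)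
  have hΨshift : Measurable fun p : ℝ × ℝ => Ψ p.1 (p.1 + p.2) :=
    hΨmeas.comp (measurable_fst.prodMk (measurable_fst.add measurable_snd))
  have hΨdecay : ∀ ξ s : ℝ, 0 ≤ ξ → 0 ≤ s →
      Ψ ξ (ξ + s) ≤ (Bβh * Bβv * Λh) * (exp (-(μ0 * ξ)) * exp (-(μ0 * s))) := by
    intro ξ s hξ hs
    have h1 := hsh0_decay ξ hξ
    have h2 := hE_decay ξ s hs
    have hA : βv ξ * sh0 ξ ≤ Bβv * (Λh * exp (-(μ0 * ξ))) :=
      mul_le_mul (hβvB ξ) h1 (hsh0_nonneg ξ) hBβv0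
    have hB : βv ξ * sh0 ξ * E ξ (ξ + s)
        ≤ (Bβv * (Λh * exp (-(μ0 * ξ)))) * exp (-(μ0 * s)) :=
      mul_le_mul hA h2 (hE0 ξ (ξ + s)) (by positivity)
    have hC2 : βh (ξ + s) * (βv ξ * sh0 ξ * E ξ (ξ + s))
        ≤ Bβh * ((Bβv * (Λh * exp (-(μ0 * ξ)))) * exp (-(μ0 * s))) :=
      mul_le_mul (hβhB _) hB (mul_nonneg (mul_nonneg (hβv0 ξ) (hsh0_nonneg ξ)) (hE0 _ _))
        hBβh0
    calc Ψ ξ (ξ + s) = βh (ξ + s) * (βv ξ * sh0 ξ * E ξ (ξ + s)) := rfl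
      _ ≤ Bβh * ((Bβv * (Λh * exp (-(μ0 * ξ)))) * exp (-(μ0 * s))) := hC2
      _ = (Bβh * Bβv * Λh) * (exp (-(μ0 * ξ)) * exp (-(μ0 * s))) := by ring
  -- bound on the complex exponential
  have key_exp : ∀ lam : ℂ, 0 ≤ lam.re → ∀ s a : ℝ, s ≤ a →
      ‖Complex.exp (-(∫ z in s..a, (((μh z + δ z + r1 z : ℝ) : ℂ) + lam)))‖
        ≤ E s a := by
    intro lam hlam s a hsa
    have hi1 : IntervalIntegrable (fun z => ((c z : ℝ) : ℂ)) volume s a := by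
      rw [intervalIntegrable_iff]
      exact (intervalIntegrable_iff.mp (hcint s a)).ofReal
    have heq : (∫ z in s..a, (((μh z + δ z + r1 z : ℝ) : ℂ) + lam))
        = (((∫ z in s..a, c z : ℝ)) : ℂ) + (a - s) • lam := by
      simp_rw [hcz]
      rw [intervalIntegral.integral_add hi1 intervalIntegrable_const,
        intervalIntegral.integral_ofReal, intervalIntegral.integral_const]
    rw [heq, Complex.norm_exp]
    have hre : (-((((∫ z in s..a, c z : ℝ)) : ℂ) + (a - s) • lam)).re
        = -((∫ z in s..a, c z) + (a - s) * lam.re) := by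
      simp [Complex.add_re, Complex.neg_re, Complex.ofReal_re, Complex.smul_re,
        smul_eq_mul]
    rw [hre]
    have h2 : 0 ≤ (a - s) * lam.re := mul_nonneg (by linarith) hlam
    have h3 : -((∫ z in s..a, c z) + (a - s) * lam.re) ≤ -(∫ z in s..a, c z) := by linarith
    calc exp (-((∫ z in s..a, c z) + (a - s) * lam.re))
        ≤ exp (-(∫ z in s..a, c z)) := exp_le_exp.2 h3
      _ = E s a := rfl
  -- bound on the norm of the inner complex integrand
  have key_integrand : ∀ lam : ℂ, 0 ≤ lam.re → ∀ a : ℝ, ∀ s : ℝ, s ∈ Ioc (0:ℝ) a →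
      ‖((βv s * sh0 s : ℝ) : ℂ) *
        Complex.exp (-(∫ z in s..a, (((μh z + δ z + r1 z : ℝ) : ℂ) + lam)))‖ ≤ ψ s a := by
    intro lam hlam a s hs
    rw [norm_mul]
    have h1 : ‖((βv s * sh0 s : ℝ) : ℂ)‖ = βv s * sh0 s := by
      rw [Complex.norm_real]
      exact abs_of_nonneg (mul_nonneg (hβv0 s) (hsh0_nonneg s))
    rw [h1]
    have h2 := key_exp lam hlam s a hs.2
    calc βv s * sh0 s *
          ‖Complex.exp (-(∫ z in s..a, (((μh z + δ z + r1 z : ℝ) : ℂ) + lam)))‖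
        ≤ βv s * sh0 s * E s a := by
          apply mul_le_mul_of_nonneg_left _ (mul_nonneg (hβv0 s) (hsh0_nonneg s))
          exact h2
      _ = ψ s a := rfl
  -- sh0 is bounded by Λh on the nonnegative axis
  have hsh0_le : ∀ s : ℝ, 0 ≤ s → sh0 s ≤ Λh := by
    intro s hs
    rw [hsh0]
    have h1 : (0:ℝ) ≤ ∫ u in (0:ℝ)..s, μh u :=
      intervalIntegral.integral_nonneg hs (fun u _ => le_trans hμ0.le (hμh_lb u))
    calc Λh * exp (-(∫ u in (0:ℝ)..s, μh u)) ≤ Λh * 1 := by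
          apply mul_le_mul_of_nonneg_left _ hΛh.le
          rw [← exp_zero]
          exact exp_le_exp.2 (by linarith)
      _ = Λh := mul_one _
  -- the decay integral q
  set q : ENNReal := ∫⁻ x in Ioi (0:ℝ), ENNReal.ofReal (exp (-(μ0 * x))) with hqdef
  have hq_ne : q ≠ ⊤ := by
    have hi : IntegrableOn (fun x => exp (-μ0 * x)) (Ioi (0:ℝ)) volume :=
      exp_neg_integrableOn_Ioi 0 hμ0
    have h2 := hi.2
    rw [hasFiniteIntegral_iff_norm] at h2
    have h3 : q = ∫⁻ x in Ioi (0:ℝ), ENNReal.ofReal ‖exp (-μ0 * x)‖ := by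
      rw [hqdef]
      apply lintegral_congr; intro x
      rw [norm_of_nonneg (exp_pos _).le, neg_mul]
    rw [h3]
    exact h2.ne
  have hqm : Measurable fun x : ℝ => ENNReal.ofReal (exp (-(μ0 * x))) :=
    (((continuous_const.mul continuous_id).neg).rexp).measurable.ennreal_ofReal
  -- pointwise bound for the inner lintegral
  have hLin_bound : ∀ s : ℝ, 0 ≤ s →
      (∫⁻ ξ in Ioi (0:ℝ), ENNReal.ofReal (Ψ ξ (ξ + s)))
        ≤ ENNReal.ofReal ((Bβh * Bβv * Λh) * exp (-(μ0 * s))) * q := by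
    intro s hs
    have h1 : (∫⁻ ξ in Ioi (0:ℝ), ENNReal.ofReal (Ψ ξ (ξ + s)))
        ≤ ∫⁻ ξ in Ioi (0:ℝ),
            ENNReal.ofReal ((Bβh * Bβv * Λh) * exp (-(μ0 * s)))
              * ENNReal.ofReal (exp (-(μ0 * ξ))) := by
      apply setLIntegral_mono' measurableSet_Ioi
      intro ξ hξ
      rw [← ENNReal.ofReal_mul (by positivity)]
      apply ENNReal.ofReal_le_ofReal
      calc Ψ ξ (ξ + s) ≤ (Bβh * Bβv * Λh) * (exp (-(μ0 * ξ)) * exp (-(μ0 * s))) :=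
            hΨdecay ξ s (le_of_lt hξ) hs
        _ = (Bβh * Bβv * Λh) * exp (-(μ0 * s)) * exp (-(μ0 * ξ)) := by ring
    rw [lintegral_const_mul _ hqm] at h1
    rw [hqdef]
    exact h1
  -- the double lintegral M (in the R0 ordering)
  set M : ENNReal := ∫⁻ s in Ioi (0:ℝ), ∫⁻ ξ in Ioi (0:ℝ), ENNReal.ofReal (Ψ ξ (ξ + s))
    with hMdef
  have hM_ne : M ≠ ⊤ := by
    have h1 : M ≤ ∫⁻ s in Ioi (0:ℝ),
        (ENNReal.ofReal (Bβh * Bβv * Λh) * q) * ENNReal.ofReal (exp (-(μ0 * s))) := by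
      rw [hMdef]
      apply setLIntegral_mono' measurableSet_Ioi
      intro s hs
      refine le_trans (hLin_bound s hs.le) (le_of_eq ?_)
      rw [ENNReal.ofReal_mul (by positivity : (0:ℝ) ≤ Bβh * Bβv * Λh)]
      ring
    rw [lintegral_const_mul _ hqm] at h1
    have h2 : (ENNReal.ofReal (Bβh * Bβv * Λh) * q) *
        (∫⁻ s in Ioi (0:ℝ), ENNReal.ofReal (exp (-(μ0 * s)))) ≠ ⊤ := by
      rw [← hqdef]
      exact ENNReal.mul_ne_top (ENNReal.mul_ne_top ENNReal.ofReal_ne_top hq_ne) hq_ne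
    exact ne_top_of_le_ne_top h2 h1
  -- the double lintegral N (in the g ordering)
  set N : ENNReal := ∫⁻ a in Ioi (0:ℝ), ∫⁻ s in Ioc (0:ℝ) a, ENNReal.ofReal (Ψ s a)
    with hNdef
  set Φ : ℝ × ℝ → ENNReal :=
    fun p => if 0 < p.2 ∧ p.2 ≤ p.1 then ENNReal.ofReal (Ψ p.2 p.1) else 0 with hΦdef
  have hΦmeas : Measurable Φ := by
    rw [hΦdef]
    apply Measurable.ite
    · exact ((measurableSet_lt measurable_const measurable_snd).inter
        (measurableSet_le measurable_snd measurable_fst))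
    · exact (hΨmeas.comp (measurable_snd.prodMk measurable_fst)).ennreal_ofReal
    · exact measurable_const
  have hstep1 : N = ∫⁻ a in Ioi (0:ℝ), ∫⁻ s, Φ (a, s) := by
    rw [hNdef]
    apply lintegral_congr; intro a
    rw [← lintegral_indicator measurableSet_Ioc]
    apply lintegral_congr; intro s
    rw [Set.indicator_apply]
    simp only [hΦdef, mem_Ioc]
  have hstep2 : (∫⁻ a in Ioi (0:ℝ), ∫⁻ s, Φ (a, s))
      = ∫⁻ s, ∫⁻ a in Ioi (0:ℝ), Φ (a, s) :=
    lintegral_lintegral_swap hΦmeas.aemeasurable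
  have hstep3 : (∫⁻ s, ∫⁻ a in Ioi (0:ℝ), Φ (a, s))
      = ∫⁻ s in Ioi (0:ℝ), ∫⁻ a in Ioi (0:ℝ), Φ (a, s) := by
    rw [← lintegral_indicator measurableSet_Ioi]
    apply lintegral_congr; intro s
    rw [Set.indicator_apply]
    by_cases hs : s ∈ Ioi (0:ℝ)
    · rw [if_pos hs]
    · rw [if_neg hs]
      have hz : ∀ a : ℝ, Φ (a, s) = 0 := by
        intro a
        rw [hΦdef]
        simp only
        rw [if_neg]
        rintro ⟨h2, _⟩
        exact hs (mem_Ioi.mpr h2)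
      calc (∫⁻ a in Ioi (0:ℝ), Φ (a, s)) = ∫⁻ _ in Ioi (0:ℝ), 0 := by
            apply lintegral_congr; intro a; rw [hz a]
        _ = 0 := lintegral_zero
  have hstep4 : ∀ s : ℝ, 0 < s →
      (∫⁻ a in Ioi (0:ℝ), Φ (a, s)) = ∫⁻ t in Ioi (0:ℝ), ENNReal.ofReal (Ψ s (s + t)) := by
    intro s hs
    have h1 : (∫⁻ a in Ioi (0:ℝ), Φ (a, s)) = ∫⁻ a, Φ (a, s) := by
      rw [← lintegral_indicator measurableSet_Ioi]
      apply lintegral_congr; intro a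
      rw [Set.indicator_apply]
      by_cases ha : a ∈ Ioi (0:ℝ)
      · rw [if_pos ha]
      · rw [if_neg ha]
        symm
        rw [hΦdef]
        simp only
        rw [if_neg]
        rintro ⟨h2, h3⟩
        exact ha (mem_Ioi.mpr (lt_of_lt_of_le h2 h3))
    have h2 : (∫⁻ a, Φ (a, s)) = ∫⁻ t, Φ (t + s, s) :=
      (lintegral_add_right_eq_self (fun a => Φ (a, s)) s).symm
    have h3 : (∫⁻ t, Φ (t + s, s)) = ∫⁻ t in Ici (0:ℝ), ENNReal.ofReal (Ψ s (s + t)) := by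
      rw [← lintegral_indicator measurableSet_Ici]
      apply lintegral_congr; intro t
      rw [Set.indicator_apply, hΦdef]
      simp only
      by_cases ht : t ∈ Ici (0:ℝ)
      · rw [if_pos ⟨hs, by linarith [mem_Ici.mp ht]⟩, if_pos ht, add_comm t s]
      · rw [if_neg, if_neg ht]
        rintro ⟨_, h4⟩
        exact ht (mem_Ici.mpr (by linarith))
    have h4 : (∫⁻ t in Ici (0:ℝ), ENNReal.ofReal (Ψ s (s + t)))
        = ∫⁻ t in Ioi (0:ℝ), ENNReal.ofReal (Ψ s (s + t)) := by
      rw [Measure.restrict_congr_set Ioi_ae_eq_Ici]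
    rw [h1, h2, h3, h4]
  have hNM : N = M := by
    rw [hstep1, hstep2, hstep3]
    have h4 : (∫⁻ s in Ioi (0:ℝ), ∫⁻ a in Ioi (0:ℝ), Φ (a, s))
        = ∫⁻ s in Ioi (0:ℝ), ∫⁻ t in Ioi (0:ℝ), ENNReal.ofReal (Ψ s (s + t)) :=
      setLIntegral_congr_fun measurableSet_Ioi (fun s hs => hstep4 s hs)
    rw [h4, hMdef]
    exact lintegral_lintegral_swap
      ((hΨshift.comp (measurable_fst.prodMk measurable_snd)).ennreal_ofReal.aemeasurable)
  have hN_ne : N ≠ ⊤ := by rw [hNM]; exact hM_ne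
  -- identification of the R0 double integral with M.toReal
  have hIinner : ∀ s : ℝ, (∫ ξ in Ioi (0:ℝ),
      βh (ξ+s) * βv ξ * sh0 ξ * exp (-(∫ u in ξ..(ξ+s), (μh u + r1 u + δ u))))
      = (∫⁻ ξ in Ioi (0:ℝ), ENNReal.ofReal (Ψ ξ (ξ + s))).toReal := by
    intro s
    have h1 : ∀ ξ : ℝ, βh (ξ+s) * βv ξ * sh0 ξ
        * exp (-(∫ u in ξ..(ξ+s), (μh u + r1 u + δ u))) = Ψ ξ (ξ + s) := by
      intro ξ
      have h2 : (∫ u in ξ..(ξ+s), (μh u + r1 u + δ u)) = ∫ u in ξ..(ξ+s), c u :=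
        intervalIntegral.integral_congr (fun u _ => hcz' u)
      rw [h2]
      show βh (ξ+s) * βv ξ * sh0 ξ * E ξ (ξ + s) = βh (ξ+s) * (βv ξ * sh0 ξ * E ξ (ξ + s))
      ring
    simp_rw [h1]
    rw [integral_eq_lintegral_of_nonneg_ae (ae_of_all _ (fun ξ => hΨ0 ξ (ξ + s)))
      ((hΨshift.comp (measurable_id.prodMk measurable_const)).aestronglyMeasurable)]
  have hLin_meas : Measurable fun s : ℝ =>
      ∫⁻ ξ in Ioi (0:ℝ), ENNReal.ofReal (Ψ ξ (ξ + s)) := by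
    apply Measurable.lintegral_prod_right
      (f := fun s ξ => ENNReal.ofReal (Ψ ξ (ξ + s)))
    exact (hΨshift.comp (measurable_snd.prodMk measurable_fst)).ennreal_ofReal
  have hIeq : (∫ s in Ioi (0:ℝ), ∫ ξ in Ioi (0:ℝ),
      βh (ξ+s) * βv ξ * sh0 ξ * exp (-(∫ u in ξ..(ξ+s), (μh u + r1 u + δ u))))
      = M.toReal := by
    simp_rw [hIinner]
    rw [integral_eq_lintegral_of_nonneg_ae (ae_of_all _ (fun s => ENNReal.toReal_nonneg))
      (hLin_meas.ennreal_toReal.aestronglyMeasurable)]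
    rw [hMdef]
    congr 1
    apply setLIntegral_congr_fun measurableSet_Ioi
    intro s hs
    apply ENNReal.ofReal_toReal
    exact ne_top_of_le_ne_top (ENNReal.mul_ne_top ENNReal.ofReal_ne_top hq_ne)
      (hLin_bound s hs.le)
  have hSv0_nonneg : 0 ≤ Sv0 / μv := by rw [hSv0def]; positivity
  have hR0sq : R0 ^ 2 = (Sv0 / μv) * M.toReal := by
    rw [hR0, sq_sqrt (by rw [hIeq]; positivity), hIeq]
  -- the main bound on g
  have hgb : ∀ lam : ℂ, 0 ≤ lam.re → ‖g lam‖ ≤ (Sv0 / μv) * N.toReal := by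
    intro lam hlam
    rw [hg lam, norm_mul]
    have habs1 : ‖((Sv0 / μv : ℝ) : ℂ)‖ = Sv0 / μv := by
      rw [Complex.norm_real, Real.norm_eq_abs]; exact abs_of_nonneg hSv0_nonneg
    rw [habs1]
    apply mul_le_mul_of_nonneg_left _ hSv0_nonneg
    refine le_trans (norm_integral_le_lintegral_norm _) ?_
    apply ENNReal.toReal_mono hN_ne
    rw [hNdef]
    apply setLIntegral_mono' measurableSet_Ioi
    intro a ha
    set L : ENNReal := ∫⁻ s in Ioc (0:ℝ) a, ENNReal.ofReal (ψ s a) with hLdef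
    have hψs_meas : Measurable fun s => ENNReal.ofReal (ψ s a) := by
      apply Measurable.ennreal_ofReal
      exact ((hβvm.mul hsh0_cont.measurable).mul
        ((hEc.comp (continuous_id.prodMk continuous_const)).measurable))
    have hL_le : L ≤ ENNReal.ofReal (Bβv * Λh) * volume (Ioc (0:ℝ) a) := by
      rw [hLdef]
      calc (∫⁻ s in Ioc (0:ℝ) a, ENNReal.ofReal (ψ s a))
          ≤ ∫⁻ _ in Ioc (0:ℝ) a, ENNReal.ofReal (Bβv * Λh) := by
            apply setLIntegral_mono' measurableSet_Ioc
            intro s hs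
            apply ENNReal.ofReal_le_ofReal
            have h6 := hE_le_one s a hs.2
            calc ψ s a = βv s * sh0 s * E s a := rfl
              _ ≤ βv s * sh0 s * 1 :=
                  mul_le_mul_of_nonneg_left h6 (mul_nonneg (hβv0 s) (hsh0_nonneg s))
              _ = βv s * sh0 s := mul_one _
              _ ≤ Bβv * Λh :=
                  mul_le_mul (hβvB s) (hsh0_le s hs.1.le) (hsh0_nonneg s) hBβv0
        _ = ENNReal.ofReal (Bβv * Λh) * volume (Ioc (0:ℝ) a) := setLIntegral_const _ _
    have hL_ne : L ≠ ⊤ :=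
      ne_top_of_le_ne_top
        (ENNReal.mul_ne_top ENNReal.ofReal_ne_top measure_Ioc_lt_top.ne) hL_le
    have hnorm_inner : ‖∫ s in (0:ℝ)..a, ((βv s * sh0 s : ℝ) : ℂ) *
        Complex.exp (-(∫ z in s..a, (((μh z + δ z + r1 z : ℝ) : ℂ) + lam)))‖
          ≤ L.toReal := by
      rw [intervalIntegral.integral_of_le (le_of_lt ha)]
      refine le_trans (norm_integral_le_lintegral_norm _) ?_
      apply ENNReal.toReal_mono hL_ne
      rw [hLdef]
      apply setLIntegral_mono' measurableSet_Ioc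
      intro s hs
      exact ENNReal.ofReal_le_ofReal (key_integrand lam hlam a s hs)
    have hfinal : ENNReal.ofReal (βh a * L.toReal)
        = ∫⁻ s in Ioc (0:ℝ) a, ENNReal.ofReal (Ψ s a) := by
      rw [ENNReal.ofReal_mul (hβh0 a), ENNReal.ofReal_toReal hL_ne, hLdef,
        ← lintegral_const_mul _ hψs_meas]
      apply lintegral_congr; intro s
      rw [← ENNReal.ofReal_mul (hβh0 a)]
    rw [norm_mul, Complex.norm_real, Real.norm_eq_abs, abs_of_nonneg (hβh0 a), ← hfinal]
    exact ENNReal.ofReal_le_ofReal (mul_le_mul_of_nonneg_left hnorm_inner (hβh0 a))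
  -- conclusion
  have part1 : ∀ lam : ℂ, 0 ≤ lam.re → ‖g lam‖ ≤ R0 ^ 2 := by
    intro lam hlam
    calc ‖g lam‖ ≤ (Sv0 / μv) * N.toReal := hgb lam hlam
      _ = (Sv0 / μv) * M.toReal := by rw [hNM]
      _ = R0 ^ 2 := hR0sq.symm
  refine ⟨part1, ?_⟩
  intro hR0lt lam hlam hEqOne
  have h1 := part1 lam hlam
  rw [hEqOne] at h1
  simp only [norm_one] at h1
  have hR0nn : 0 ≤ R0 := by rw [hR0]; exact Real.sqrt_nonneg _
  nlinarith
end
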